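/- arXiv:2005.05697 — 2 statements merged into one kernel-verified Lean document; each statement's English description precedes it below -/
import Mathlib

section
/- Let Γ be a countable discrete group with a measurable action on a measure space (X,ν), let Y ⊆ X be a domain of asymptotic expansion, let c ∈ (0,1), and let (Z_n)_{n∈ℕ} be a decreasing sequence of measurable subsets of Y with ν(Z_n) → 0. Then there exist N₀ ∈ ℕ, finite symmetric subsets S_n ⊆ Γ with 1 ∈ S_n for n > N₀, and an increasing sequence (Y_n)_{n>N₀} of measurable subsets of Y with ν(Y ∖ ⋃_{n>N₀} Y_n) = 0, such that each Y_n is a domain of (c, S_n)-expansion and Y_n ⊆ Y ∖ Z_n for every n > N₀. -/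
open MeasureTheory Set Filter Pointwise

/-- The union `S · A = ⋃ s ∈ S, s • A` of the translates of `A` by elements of the
finite set `S ⊆ Γ`. -/
def finSMul {Γ X : Type*} [Group Γ] [MulAction Γ X] (S : Finset Γ) (A : Set X) : Set X :=
  ⋃ s ∈ S, s • A

/-- `S` is a finite symmetric subset of `Γ` containing the identity. -/
def SymmFin {Γ : Type*} [Group Γ] (S : Finset Γ) : Prop :=
  (1 : Γ) ∈ S ∧ ∀ s ∈ S, s⁻¹ ∈ S

/-- The `S`-boundary `∂_S A = (S·A) \ A`. -/
def finBdry {Γ X : Type*} [Group Γ] [MulAction Γ X] (S : Finset Γ) (A : Set X) : Set X :=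
  finSMul S A \ A

/-- `Y` is a domain of `(c,S)`-expansion: `ν((S·A) ∩ Y) > (1+c)·ν(A)` for every
measurable `A ⊆ Y` with `0 < ν(A) ≤ ν(Y)/2`. -/
def ExpandsOn {Γ X : Type*} [Group Γ] [MulAction Γ X] [MeasurableSpace X]
    (ν : MeasureTheory.Measure X) (Y : Set X) (c : ℝ) (S : Finset Γ) : Prop :=
  ∀ A : Set X, MeasurableSet A → A ⊆ Y → 0 < ν A → ν A ≤ ν Y / 2 →
    (1 + ENNReal.ofReal c) * ν A < ν (finSMul S A ∩ Y)

/-- `Y` is a domain of expansion: `(c,S)`-expansion for some `c > 0` and some finite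
symmetric `S ∋ 1`. -/
def ExpDomain (Γ : Type*) {X : Type*} [Group Γ] [MulAction Γ X] [MeasurableSpace X]
    (ν : MeasureTheory.Measure X) (Y : Set X) : Prop :=
  ∃ c : ℝ, 0 < c ∧ ∃ S : Finset Γ, SymmFin S ∧ ExpandsOn ν Y c S

/-- The `(α,c,S)` asymptotic-expansion estimate on `Y`: `ν((S·A) ∩ Y) > (1+c)·ν(A)` for
every measurable `A ⊆ Y` with `α·ν(Y) ≤ ν(A) ≤ ν(Y)/2`. -/
def AsymExpandsOn {Γ X : Type*} [Group Γ] [MulAction Γ X] [MeasurableSpace X]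
    (ν : MeasureTheory.Measure X) (Y : Set X) (α c : ℝ) (S : Finset Γ) : Prop :=
  ∀ A : Set X, MeasurableSet A → A ⊆ Y → ENNReal.ofReal α * ν Y ≤ ν A → ν A ≤ ν Y / 2 →
    (1 + ENNReal.ofReal c) * ν A < ν (finSMul S A ∩ Y)

/-- `Y` is a domain of asymptotic expansion. -/
def AsymExpDomain (Γ : Type*) {X : Type*} [Group Γ] [MulAction Γ X] [MeasurableSpace X]
    (ν : MeasureTheory.Measure X) (Y : Set X) : Prop :=
  ∀ α : ℝ, 0 < α → α ≤ 1 / 2 →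
    ∃ c : ℝ, 0 < c ∧ ∃ S : Finset Γ, SymmFin S ∧ AsymExpandsOn ν Y α c S

/-- The action of `Γ` on the probability space `(X,ν)` is strongly ergodic: every almost
invariant sequence of measurable sets is asymptotically trivial. -/
def StronglyErgodic (Γ : Type*) {X : Type*} [Group Γ] [MulAction Γ X] [MeasurableSpace X]
    (ν : MeasureTheory.Measure X) : Prop :=
  ∀ C : ℕ → Set X, (∀ n, MeasurableSet (C n)) →
    (∀ γ : Γ, Filter.Tendsto (fun n => ν (symmDiff (C n) (γ • C n))) Filter.atTop (nhds 0)) →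
    Filter.Tendsto (fun n => ν (C n) * (1 - ν (C n))) Filter.atTop (nhds 0)

/-- The action of `Γ` on `(X,ν)` is measure-class-preserving. -/
def MeasClassPres (Γ : Type*) {X : Type*} [Group Γ] [MulAction Γ X] [MeasurableSpace X]
    (ν : MeasureTheory.Measure X) : Prop :=
  ∀ (γ : Γ) (A : Set X), MeasurableSet A → (ν (γ • A) = 0 ↔ ν A = 0)

/-- The action of `Γ` on `(X,ν)` is ergodic: every invariant measurable set is null or
conull. -/
def ErgodicAct (Γ : Type*) {X : Type*} [Group Γ] [MulAction Γ X] [MeasurableSpace X]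
    (ν : MeasureTheory.Measure X) : Prop :=
  ∀ A : Set X, MeasurableSet A → (∀ γ : Γ, γ • A = A) → ν A = 0 ∨ ν Aᶜ = 0

/-- `W` admits an exhaustion by measurable subsets satisfying `P`. -/
def ExhaustionBy {X : Type*} [MeasurableSpace X] (ν : MeasureTheory.Measure X)
    (W : Set X) (P : Set X → Prop) : Prop :=
  ∃ Y : ℕ → Set X, Monotone Y ∧ (∀ n, MeasurableSet (Y n)) ∧ (∀ n, Y n ⊆ W) ∧
    (∀ n, P (Y n)) ∧ ν (W \ ⋃ n, Y n) = 0

namespace AuxExp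

variable {Γ X : Type*} [Group Γ] [MulAction Γ X]

lemma mem_finSMul {S : Finset Γ} {A : Set X} {x : X} :
    x ∈ finSMul S A ↔ ∃ s ∈ S, ∃ a ∈ A, s • a = x := by
  simp [finSMul, Set.mem_smul_set]

lemma finSMul_mono_set {S : Finset Γ} {A B : Set X} (h : A ⊆ B) :
    finSMul S A ⊆ finSMul S B := by
  intro x hx
  rw [mem_finSMul] at hx ⊢
  obtain ⟨s, hs, a, ha, rfl⟩ := hx
  exact ⟨s, hs, a, h ha, rfl⟩

lemma finSMul_mono_finset {S T : Finset Γ} {A : Set X} (h : S ⊆ T) :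
    finSMul S A ⊆ finSMul T A := by
  intro x hx
  rw [mem_finSMul] at hx ⊢
  obtain ⟨s, hs, a, ha, rfl⟩ := hx
  exact ⟨s, h hs, a, ha, rfl⟩

lemma subset_finSMul {S : Finset Γ} {A : Set X} (h1 : (1:Γ) ∈ S) : A ⊆ finSMul S A := by
  intro x hx
  rw [mem_finSMul]
  exact ⟨1, h1, x, hx, one_smul _ _⟩

lemma finSMul_union {S : Finset Γ} {A B : Set X} :
    finSMul S (A ∪ B) = finSMul S A ∪ finSMul S B := by
  ext x
  simp only [mem_finSMul, Set.mem_union]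
  constructor
  · rintro ⟨s, hs, a, (ha | ha), rfl⟩
    · exact Or.inl ⟨s, hs, a, ha, rfl⟩
    · exact Or.inr ⟨s, hs, a, ha, rfl⟩
  · rintro (⟨s, hs, a, ha, rfl⟩ | ⟨s, hs, a, ha, rfl⟩)
    · exact ⟨s, hs, a, Or.inl ha, rfl⟩
    · exact ⟨s, hs, a, Or.inr ha, rfl⟩

lemma finSMul_iUnion {S : Finset Γ} {A : ℕ → Set X} :
    finSMul S (⋃ k, A k) = ⋃ k, finSMul S (A k) := by
  ext x
  simp only [mem_finSMul, Set.mem_iUnion]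
  constructor
  · rintro ⟨s, hs, a, ⟨k, ha⟩, rfl⟩
    exact ⟨k, s, hs, a, ha, rfl⟩
  · rintro ⟨k, s, hs, a, ha, rfl⟩
    exact ⟨s, hs, a, ⟨k, ha⟩, rfl⟩

lemma finSMul_empty {S : Finset Γ} : finSMul S (∅ : Set X) = ∅ := by
  simp [finSMul]

lemma finSMul_mul [DecidableEq Γ] {S T : Finset Γ} {A : Set X} :
    finSMul (S * T) A = finSMul S (finSMul T A) := by
  ext x
  simp only [mem_finSMul]
  constructor
  · rintro ⟨u, hu, a, ha, rfl⟩
    obtain ⟨s, hs, t, ht, rfl⟩ := Finset.mem_mul.mp hu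
    exact ⟨s, hs, t • a, ⟨t, ht, a, ha, rfl⟩, smul_smul s t a⟩
  · rintro ⟨s, hs, y, ⟨t, ht, a, ha, rfl⟩, rfl⟩
    exact ⟨s * t, Finset.mul_mem_mul hs ht, a, ha, (smul_smul s t a).symm⟩

variable [MeasurableSpace X] 

lemma measurable_smul_set (hmeas : ∀ γ : Γ, Measurable fun x : X => γ • x)
    {A : Set X} (hA : MeasurableSet A) (γ : Γ) : MeasurableSet (γ • A) := by
  have : γ • A = (fun x : X => γ⁻¹ • x) ⁻¹' A := by
    ext x
    simp [Set.mem_smul_set_iff_inv_smul_mem]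
  rw [this]
  exact hmeas γ⁻¹ hA

lemma measurable_finSMul (hmeas : ∀ γ : Γ, Measurable fun x : X => γ • x)
    {S : Finset Γ} {A : Set X} (hA : MeasurableSet A) : MeasurableSet (finSMul S A) := by
  exact MeasurableSet.biUnion (Finset.countable_toSet S)
    (fun s _ => measurable_smul_set hmeas hA s)

lemma symmFin_union [DecidableEq Γ] {S T : Finset Γ} (hS : SymmFin S) (hT : SymmFin T) :
    SymmFin (S ∪ T) := by
  constructor
  · exact Finset.mem_union_left _ hS.1
  · intro s hs
    rcases Finset.mem_union.mp hs with h | h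
    · exact Finset.mem_union_left _ (hS.2 s h)
    · exact Finset.mem_union_right _ (hT.2 s h)

lemma symmFin_pow [DecidableEq Γ] {S : Finset Γ} (hS : SymmFin S) (n : ℕ) :
    SymmFin (S ^ n) := by
  induction n with
  | zero =>
    constructor
    · simp
    · intro s hs
      simp only [pow_zero, Finset.mem_one] at hs
      simp [hs]
  | succ n ih =>
    constructor
    · rw [pow_succ]
      have := Finset.mul_mem_mul ih.1 hS.1
      simpa using this
    · intro s hs
      rw [pow_succ] at hs
      obtain ⟨a, ha, b, hb, rfl⟩ := Finset.mem_mul.mp hs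
      rw [mul_inv_rev, pow_succ']
      exact Finset.mul_mem_mul (hS.2 b hb) (ih.2 a ha)

lemma pow_subset_pow [DecidableEq Γ] {S : Finset Γ} (h1 : (1:Γ) ∈ S) {m n : ℕ}
    (h : m ≤ n) : S ^ m ⊆ S ^ n := by
  induction h with
  | refl => exact subset_rfl
  | step h ih =>
    rename_i k hk
    intro x hx
    rw [pow_succ]
    have := Finset.mul_mem_mul (ih hx) h1
    simpa using this

end AuxExp

namespace AuxExp

section Helpers

variable {X : Type*} [MeasurableSpace X] {ν : Measure X} {Y : Set X}

lemma contra_coeff (hY0 : ν Y ≠ 0) (hYfin : ν Y ≠ ⊤) {q : ℝ} (hq : q < 1)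
    (h : ν Y ≤ ENNReal.ofReal q * ν Y) : False := by
  have h1 : ENNReal.ofReal q * ν Y < 1 * ν Y :=
    (ENNReal.mul_lt_mul_iff_left hY0 hYfin).mpr (ENNReal.ofReal_lt_one.mpr hq)
  rw [one_mul] at h1
  exact absurd h (not_le.mpr h1)

lemma gt_coeff (hY0 : ν Y ≠ 0) (hYfin : ν Y ≠ ⊤) {q : ℝ} (hq : 1 < q) :
    ν Y < ENNReal.ofReal q * ν Y := by
  have h1 : 1 * ν Y < ENNReal.ofReal q * ν Y :=
    (ENNReal.mul_lt_mul_iff_left hY0 hYfin).mpr (ENNReal.one_lt_ofReal.mpr hq)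
  rwa [one_mul] at h1

lemma coeff_le_coeff (hY0 : ν Y ≠ 0) (hYfin : ν Y ≠ ⊤) {a b : ℝ} (hb : 0 ≤ b)
    (h : ENNReal.ofReal a * ν Y ≤ ENNReal.ofReal b * ν Y) : a ≤ b := by
  have := (ENNReal.mul_le_mul_iff_left hY0 hYfin).mp h
  exact (ENNReal.ofReal_le_ofReal_iff hb).mp this

lemma split_coeff (hYfin : ν Y ≠ ⊤) {Q : ENNReal} {s : ℝ} (hs0 : 0 ≤ s) (hs1 : s ≤ 1)
    (h : ν Y ≤ Q + ENNReal.ofReal s * ν Y) : ENNReal.ofReal (1 - s) * ν Y ≤ Q := by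
  have hsplit : ENNReal.ofReal (1 - s) * ν Y + ENNReal.ofReal s * ν Y = ν Y := by
    rw [← add_mul, ← ENNReal.ofReal_add (by linarith) hs0]
    norm_num
  have hfin : ENNReal.ofReal s * ν Y ≠ ⊤ := ENNReal.mul_ne_top ENNReal.ofReal_ne_top hYfin
  have := hsplit.le.trans h
  exact (ENNReal.add_le_add_iff_right hfin).mp this

lemma cancel_right {a b x : ENNReal} (hx : x ≠ ⊤) (h : a + x ≤ b + x) : a ≤ b :=
  (ENNReal.add_le_add_iff_right hx).mp h

end Helpers

end AuxExp

namespace AuxExp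

section Amp

variable {Γ X : Type*} [Group Γ] [MulAction Γ X] [MeasurableSpace X]

/-- Amplification: from asymptotic expansion, mid-size sets nearly fill `Y`. -/
lemma amp_lemma [DecidableEq Γ] (ν : Measure X)
    (hmeas : ∀ γ : Γ, Measurable fun x : X => γ • x)
    (Y : Set X) (hYm : MeasurableSet Y) (hY0 : ν Y ≠ 0) (hYfin : ν Y ≠ ⊤)
    (hdom : AsymExpDomain Γ ν Y) (α : ℝ) (hα : 0 < α) (hα2 : α ≤ 1/2) :
    ∃ S : Finset Γ, SymmFin S ∧ ∀ E : Set X, MeasurableSet E → E ⊆ Y →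
      ENNReal.ofReal α * ν Y ≤ ν E →
      ν Y ≤ ν (finSMul S E ∩ Y) + ENNReal.ofReal α * ν Y := by
  obtain ⟨ca, hca, S0, hS0sym, hexp⟩ := hdom α hα hα2
  obtain ⟨K, hK⟩ : ∃ K : ℕ, 1/α < (1 + ca) ^ K :=
    pow_unbounded_of_one_lt (1/α) (by linarith)
  have hKα : 1 < (1 + ca) ^ K * α := by
    rw [div_lt_iff₀ hα] at hK
    nlinarith
  refine ⟨S0 ^ (2 * K), symmFin_pow hS0sym _, ?_⟩
  intro E hEm hEsub hElow
  -- the iterated sets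
  set F : ℕ → Set X := fun k => Nat.rec E (fun _ Fk => finSMul S0 Fk ∩ Y) k with hF
  have hFs : ∀ k, F (k + 1) = finSMul S0 (F k) ∩ Y := fun k => rfl
  have hF0 : F 0 = E := rfl
  have hFY : ∀ k, F k ⊆ Y := by
    intro k
    cases k with
    | zero => exact hEsub
    | succ k => rw [hFs]; exact Set.inter_subset_right
  have hFm : ∀ k, MeasurableSet (F k) := by
    intro k
    induction k with
    | zero => exact hEm
    | succ k ih => rw [hFs]; exact (measurable_finSMul hmeas ih).inter hYm
  have hFmono : ∀ k, F k ⊆ F (k + 1) := by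
    intro k
    rw [hFs]
    exact Set.subset_inter (subset_finSMul hS0sym.1) (hFY k)
  have hFmono' : ∀ j k, j ≤ k → F j ⊆ F k := by
    intro j k h
    induction h with
    | refl => exact subset_rfl
    | step h ih => exact ih.trans (hFmono _)
  have hFpow : ∀ k, F k ⊆ finSMul (S0 ^ k) E := by
    intro k
    induction k with
    | zero => exact subset_finSMul (symmFin_pow hS0sym 0).1
    | succ k ih =>
      rw [hFs]
      refine Set.inter_subset_left.trans ?_
      rw [pow_succ']
      rw [finSMul_mul]
      exact finSMul_mono_set ih
  have hFlow : ∀ k, ENNReal.ofReal α * ν Y ≤ ν (F k) := by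
    intro k
    exact hElow.trans (measure_mono (hFmono' 0 k (Nat.zero_le k)))
  have hofReal_ca : ENNReal.ofReal (1 + ca) = 1 + ENNReal.ofReal ca := by
    rw [ENNReal.ofReal_add zero_le_one hca.le, ENNReal.ofReal_one]
  -- growth phase
  have hgrow : ∀ k, ν (F k) ≤ ν Y / 2 →
      ENNReal.ofReal ((1 + ca) ^ k * α) * ν Y ≤ ν (F k) := by
    intro k
    induction k with
    | zero => intro _; simpa using hFlow 0
    | succ k ih =>
      intro hhalf
      have hk2 : ν (F k) ≤ ν Y / 2 := (measure_mono (hFmono k)).trans hhalf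
      have hstep := hexp (F k) (hFm k) (hFY k) (hFlow k) hk2
      rw [← hFs] at hstep
      have h1 : ENNReal.ofReal ((1 + ca) ^ (k+1) * α) * ν Y
          = ENNReal.ofReal (1 + ca) * (ENNReal.ofReal ((1 + ca) ^ k * α) * ν Y) := by
        rw [← mul_assoc, ← ENNReal.ofReal_mul (by positivity)]
        ring_nf
      rw [h1, hofReal_ca]
      calc (1 + ENNReal.ofReal ca) * (ENNReal.ofReal ((1 + ca) ^ k * α) * ν Y)
          ≤ (1 + ENNReal.ofReal ca) * ν (F k) := by
            exact mul_le_mul_right (ih hk2) _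
        _ ≤ ν (F (k+1)) := hstep.le
  -- some index ≤ K passes half
  have hhalf : ∃ k, k ≤ K ∧ ν Y / 2 < ν (F k) := by
    by_contra hcon
    push_neg at hcon
    have hKb := hgrow K (hcon K le_rfl)
    have : ν Y < ENNReal.ofReal ((1 + ca) ^ K * α) * ν Y := gt_coeff hY0 hYfin hKα
    have h2 : ν Y < ν Y / 2 := this.trans_le (hKb.trans (hcon K le_rfl))
    exact absurd h2 (not_lt.mpr (ENNReal.half_le_self))
  obtain ⟨kh, hkhK, hkhhalf⟩ := hhalf
  have hhalf' : ∀ k, kh ≤ k → ν Y / 2 < ν (F k) := fun k h =>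
    hkhhalf.trans_le (measure_mono (hFmono' kh k h))
  -- deficits
  set D : ℕ → Set X := fun k => Y \ F k with hD
  have hDm : ∀ k, MeasurableSet (D k) := fun k => hYm.diff (hFm k)
  have hDanti : ∀ j k, j ≤ k → D k ⊆ D j := fun j k h =>
    Set.diff_subset_diff_right (hFmono' j k h)
  have hDY : ∀ k, D k ⊆ Y := fun k => Set.diff_subset
  have hDF : ∀ k, ν (F k) + ν (D k) = ν Y := by
    intro k
    have := measure_add_diff (μ := ν) (hFm k).nullMeasurableSet Y
    rwa [Set.union_eq_self_of_subset_left (hFY k)] at this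
  have hDhalf : ∀ k, kh ≤ k → ν (D k) ≤ ν Y / 2 := by
    intro k hk
    by_contra hcon
    push_neg at hcon
    have := ENNReal.add_lt_add (hhalf' k hk) hcon
    rw [ENNReal.add_halves, hDF k] at this
    exact absurd this (lt_irrefl _)
  -- descent step
  have hstep : ∀ k, kh ≤ k →
      ν (D (k+1)) < ENNReal.ofReal α * ν Y ∨
      (1 + ENNReal.ofReal ca) * ν (D (k+1)) ≤ ν (D k) := by
    intro k hk
    by_cases hc : ENNReal.ofReal α * ν Y ≤ ν (D (k+1))
    · right
      have hsub : finSMul S0 (D (k+1)) ∩ Y ⊆ D k := by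
        intro x hx
        obtain ⟨hx1, hx2⟩ := hx
        rw [mem_finSMul] at hx1
        obtain ⟨s, hs, d, hd, rfl⟩ := hx1
        refine ⟨hx2, fun hFk => ?_⟩
        have hdF : d ∈ F (k+1) := by
          rw [hFs]
          refine ⟨?_, (hDY (k+1)) hd⟩
          rw [mem_finSMul]
          exact ⟨s⁻¹, hS0sym.2 s hs, s • d, hFk, by simp⟩
        exact hd.2 hdF
      have hDup : ν (D (k+1)) ≤ ν Y / 2 := hDhalf (k+1) (hk.trans (Nat.le_succ k))
      have := hexp (D (k+1)) (hDm (k+1)) (hDY (k+1)) hc hDup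
      exact (this.trans_le (measure_mono hsub)).le
    · left
      exact not_le.mp hc
  -- descent accumulation
  have hdesc : ∀ j, (∀ i, i ≤ j → ENNReal.ofReal α * ν Y ≤ ν (D (kh + i))) →
      ENNReal.ofReal ((1 + ca) ^ j) * ν (D (kh + j)) ≤ ν (D kh) := by
    intro j
    induction j with
    | zero => intro _; simp
    | succ j ih =>
      intro hall
      have hih := ih (fun i hi => hall i (hi.trans (Nat.le_succ j)))
      rcases hstep (kh + j) (Nat.le_add_right kh j) with hl | hr
      · exact absurd (hall (j+1) le_rfl) (not_le.mpr hl)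
      · have h1 : ENNReal.ofReal ((1 + ca) ^ (j+1)) * ν (D (kh + j + 1))
            = ENNReal.ofReal ((1 + ca) ^ j) * ((1 + ENNReal.ofReal ca) * ν (D (kh + j + 1))) := by
          rw [← mul_assoc, ← hofReal_ca, ← ENNReal.ofReal_mul (by positivity)]
          ring_nf
        have hgoal : kh + (j + 1) = kh + j + 1 := by omega
        rw [hgoal, h1]
        calc ENNReal.ofReal ((1 + ca) ^ j) * ((1 + ENNReal.ofReal ca) * ν (D (kh + j + 1)))
            ≤ ENNReal.ofReal ((1 + ca) ^ j) * ν (D (kh + j)) := mul_le_mul_right hr _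
          _ ≤ ν (D kh) := hih
  -- final deficit bound
  have hfin : ν (D (kh + K)) < ENNReal.ofReal α * ν Y := by
    by_contra hcon
    push_neg at hcon
    have hall : ∀ i, i ≤ K → ENNReal.ofReal α * ν Y ≤ ν (D (kh + i)) := by
      intro i hi
      exact hcon.trans (measure_mono (hDanti (kh + i) (kh + K) (by omega)))
    have h1 := hdesc K hall
    have h2 : ENNReal.ofReal ((1 + ca) ^ K) * (ENNReal.ofReal α * ν Y) ≤ ν (D kh) :=
      le_trans (mul_le_mul_right hcon _) h1
    have h3 : ENNReal.ofReal ((1 + ca) ^ K * α) * ν Y ≤ ν Y := by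
      rw [ENNReal.ofReal_mul (by positivity), mul_assoc]
      exact h2.trans (measure_mono (hDY kh))
    exact absurd h3 (not_le.mpr (gt_coeff hY0 hYfin hKα))
  -- conclude
  have h2K : ν (D (2 * K)) < ENNReal.ofReal α * ν Y := by
    refine lt_of_le_of_lt ?_ hfin
    exact measure_mono (hDanti (kh + K) (2 * K) (by omega))
  have hFfin : ν (F (2 * K)) ≤ ν (finSMul (S0 ^ (2 * K)) E ∩ Y) :=
    measure_mono (Set.subset_inter (hFpow (2 * K)) (hFY (2 * K)))
  calc ν Y = ν (F (2 * K)) + ν (D (2 * K)) := (hDF (2 * K)).symm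
    _ ≤ ν (finSMul (S0 ^ (2 * K)) E ∩ Y) + ENNReal.ofReal α * ν Y :=
        add_le_add hFfin h2K.le

end Amp

end AuxExp

namespace AuxExp

section MaxPair

variable {X : Type*} [MeasurableSpace X]

lemma exists_maximal_pair (ν : Measure X) (F : Set (Set X × Set X))
    (hmem : (∅, ∅) ∈ F) (L : ENNReal) (hL : L ≠ ⊤)
    (hbdd : ∀ p ∈ F, ν p.1 + ν p.2 ≤ L)
    (hm : ∀ p ∈ F, MeasurableSet p.1 ∧ MeasurableSet p.2)
    (hclosed : ∀ f : ℕ → Set X × Set X, (∀ k, f k ∈ F) →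
      (∀ k, (f k).1 ⊆ (f (k+1)).1) → (∀ k, (f k).2 ⊆ (f (k+1)).2) →
      ((⋃ k, (f k).1), ⋃ k, (f k).2) ∈ F) :
    ∃ p, p ∈ F ∧ ∀ q ∈ F, p.1 ⊆ q.1 → p.2 ⊆ q.2 →
      ν (q.1 \ p.1) = 0 ∧ ν (q.2 \ p.2) = 0 := by
  have hε : ∀ k : ℕ, ((2:ENNReal)⁻¹) ^ k ≠ 0 := by
    intro k
    apply pow_ne_zero
    simp
  have step : ∀ (k : ℕ) (p : {p // p ∈ F}), ∃ q : {q // q ∈ F},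
      p.1.1 ⊆ q.1.1 ∧ p.1.2 ⊆ q.1.2 ∧
      ∀ r ∈ F, p.1.1 ⊆ r.1 → p.1.2 ⊆ r.2 →
        ν r.1 + ν r.2 ≤ ν q.1.1 + ν q.1.2 + ((2:ENNReal)⁻¹) ^ k := by
    rintro k ⟨p, hp⟩
    set G := ⨆ (r : {r : Set X × Set X // r ∈ F ∧ p.1 ⊆ r.1 ∧ p.2 ⊆ r.2}),
      (ν r.1.1 + ν r.1.2) with hGdef
    have hGle : ∀ r (hr : r ∈ F) (h1 : p.1 ⊆ r.1) (h2 : p.2 ⊆ r.2), ν r.1 + ν r.2 ≤ G := by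
      intro r hr h1 h2
      exact le_iSup (fun (r : {r : Set X × Set X // r ∈ F ∧ p.1 ⊆ r.1 ∧ p.2 ⊆ r.2}) =>
        ν r.1.1 + ν r.1.2) ⟨r, hr, h1, h2⟩
    by_cases hG : G ≤ ((2:ENNReal)⁻¹) ^ k
    · refine ⟨⟨p, hp⟩, subset_rfl, subset_rfl, ?_⟩
      intro r hr h1 h2
      exact (hGle r hr h1 h2).trans (hG.trans le_add_self)
    · push_neg at hG
      have hGfin : G ≠ ⊤ := by
        refine ne_top_of_le_ne_top hL (iSup_le ?_)
        rintro ⟨r, hr, -, -⟩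
        exact hbdd r hr
      have hG0 : G ≠ 0 := by
        intro h
        rw [h] at hG
        exact ENNReal.not_lt_zero hG
      have h2 : G - ((2:ENNReal)⁻¹) ^ k < G := ENNReal.sub_lt_self hGfin hG0 (hε k)
      rw [hGdef] at h2
      obtain ⟨⟨r, hrF, hr1, hr2⟩, hrgt⟩ := lt_iSup_iff.mp h2
      refine ⟨⟨r, hrF⟩, hr1, hr2, ?_⟩
      intro r' hr' h1' h2'
      have hle : ν r'.1 + ν r'.2 ≤ G := hGle r' hr' h1' h2'
      have hG' : G ≤ (ν r.1 + ν r.2) + ((2:ENNReal)⁻¹) ^ k := by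
        have hcan := tsub_add_cancel_of_le hG.le
        calc G = G - ((2:ENNReal)⁻¹) ^ k + ((2:ENNReal)⁻¹) ^ k := hcan.symm
          _ ≤ (ν r.1 + ν r.2) + ((2:ENNReal)⁻¹) ^ k := add_le_add_left hrgt.le _
      exact hle.trans hG'
  choose stepf hs1 hs2 hs3 using step
  set f : ℕ → {p // p ∈ F} := fun k => Nat.rec ⟨(∅, ∅), hmem⟩ (fun k pk => stepf k pk) k with hf
  have hfs : ∀ k, f (k+1) = stepf k (f k) := fun k => rfl
  have hmono1 : ∀ k, (f k).1.1 ⊆ (f (k+1)).1.1 := fun k => hs1 k (f k)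
  have hmono2 : ∀ k, (f k).1.2 ⊆ (f (k+1)).1.2 := fun k => hs2 k (f k)
  set pω : Set X × Set X := ((⋃ k, (f k).1.1), ⋃ k, (f k).1.2) with hpωdef
  have hpω : pω ∈ F := hclosed _ (fun k => (f k).2) hmono1 hmono2
  refine ⟨pω, hpω, ?_⟩
  intro q hq hq1 hq2
  have hsub1 : ∀ k, (f k).1.1 ⊆ q.1 := fun k => (Set.subset_iUnion _ k).trans hq1
  have hsub2 : ∀ k, (f k).1.2 ⊆ q.2 := fun k => (Set.subset_iUnion _ k).trans hq2
  have hk : ∀ k, ν q.1 + ν q.2 ≤ ν pω.1 + ν pω.2 + ((2:ENNReal)⁻¹) ^ k := by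
    intro k
    have h := hs3 k (f k) q hq (hsub1 k) (hsub2 k)
    refine h.trans (add_le_add_left (add_le_add (measure_mono ?_) (measure_mono ?_)) _)
    · exact Set.subset_iUnion (fun k => (f k).1.1) (k+1)
    · exact Set.subset_iUnion (fun k => (f k).1.2) (k+1)
  have hlim : ν q.1 + ν q.2 ≤ ν pω.1 + ν pω.2 := by
    have ht : Filter.Tendsto (fun k : ℕ => ν pω.1 + ν pω.2 + ((2:ENNReal)⁻¹) ^ k)
        Filter.atTop (nhds (ν pω.1 + ν pω.2 + 0)) := by
      refine Filter.Tendsto.add tendsto_const_nhds ?_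
      refine ENNReal.tendsto_pow_atTop_nhds_zero_of_lt_one ?_
      rw [ENNReal.inv_lt_one]
      norm_num
    rw [add_zero] at ht
    exact ge_of_tendsto' ht hk
  have hd1 : ν q.1 = ν pω.1 + ν (q.1 \ pω.1) := by
    have := measure_add_diff (μ := ν) (hm _ hpω).1.nullMeasurableSet q.1
    rw [Set.union_eq_self_of_subset_left hq1] at this
    exact this.symm
  have hd2 : ν q.2 = ν pω.2 + ν (q.2 \ pω.2) := by
    have := measure_add_diff (μ := ν) (hm _ hpω).2.nullMeasurableSet q.2
    rw [Set.union_eq_self_of_subset_left hq2] at this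
    exact this.symm
  rw [hd1, hd2] at hlim
  have hfin : ν pω.1 + ν pω.2 ≠ ⊤ := ne_top_of_le_ne_top hL (hbdd _ hpω)
  have hre : ν pω.1 + ν (q.1 \ pω.1) + (ν pω.2 + ν (q.2 \ pω.2))
      = (ν pω.1 + ν pω.2) + (ν (q.1 \ pω.1) + ν (q.2 \ pω.2)) := by ring
  rw [hre] at hlim
  have h0 : ν (q.1 \ pω.1) + ν (q.2 \ pω.2) = 0 := by
    have h' : (ν pω.1 + ν pω.2) + (ν (q.1 \ pω.1) + ν (q.2 \ pω.2))
        ≤ (ν pω.1 + ν pω.2) + 0 := by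
      rw [add_zero]
      exact hlim
    have := (ENNReal.add_le_add_iff_left hfin).mp h'
    exact le_antisymm this zero_le
  exact ⟨(add_eq_zero.mp h0).1, (add_eq_zero.mp h0).2⟩

end MaxPair

end AuxExp

namespace AuxExp

lemma ofReal_mul_half {q : ℝ} (x : ENNReal) :
    ENNReal.ofReal q * (x / 2) = ENNReal.ofReal (q / 2) * x := by
  have h2 : ENNReal.ofReal (2:ℝ) = 2 := by norm_num
  rw [ENNReal.ofReal_div_of_pos (by norm_num : (0:ℝ) < 2), h2]
  simp only [div_eq_mul_inv]
  ring

end AuxExp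

namespace AuxExp

section Stage

variable {Γ X : Type*} [Group Γ] [MulAction Γ X] [MeasurableSpace X]

lemma stage_lemma (ν : Measure X)
    (hmeas : ∀ γ : Γ, Measurable fun x : X => γ • x)
    (Y : Set X) (hYm : MeasurableSet Y) (hY0 : ν Y ≠ 0) (hYfin : ν Y ≠ ⊤)
    (u ck cp αk αp : ℝ)
    (hu : 0 < u) (hu1 : u ≤ 1)
    (hαk0 : 0 < αk) (hαkp : αk ≤ αp) (hαp : αp ≤ u/32)
    (hck0 : 0 ≤ ck) (hckp : ck ≤ cp) (hck1 : ck ≤ 1 - u)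
    (W P : Set X) (hWm : MeasurableSet W) (hWY : W ⊆ Y)
    (hZsmall : ν (Y \ W) ≤ ENNReal.ofReal (u/32) * ν Y)
    (hPm : MeasurableSet P) (hPW : P ⊆ W)
    (Tp Tk : Finset Γ) (hTpk : Tp ⊆ Tk) (hTk1 : (1:Γ) ∈ Tk)
    (hexpP : ∀ A : Set X, MeasurableSet A → A ⊆ P → 0 < ν A → ν A ≤ ν P / 2 →
      ENNReal.ofReal (1 + cp) * ν A < ν (finSMul Tp A ∩ P))
    (hwit : ∀ A : Set X, MeasurableSet A → A ⊆ P → ENNReal.ofReal αp * ν Y ≤ ν A →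
      ENNReal.ofReal (1 - u/8) * ν Y ≤ ν (finSMul Tp A ∩ P))
    (hsmall : ∀ A B : Set X, A ⊆ P → B ⊆ P → ν A ≤ ENNReal.ofReal αp * ν Y →
      ν B ≤ ENNReal.ofReal αp * ν Y → ν (A ∪ B) ≤ ν P / 2)
    (hamp : ∀ E : Set X, MeasurableSet E → E ⊆ Y → ENNReal.ofReal αk * ν Y ≤ ν E →
      ν Y ≤ ν (finSMul Tk E ∩ Y) + ENNReal.ofReal αk * ν Y) :
    ∃ B : Set X, MeasurableSet B ∧ B ⊆ W \ P ∧ ν B ≤ ENNReal.ofReal αk * ν Y ∧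
      ∀ A : Set X, MeasurableSet A → A ⊆ W \ B → 0 < ν A → ν A ≤ ν (W \ B) / 2 →
        ENNReal.ofReal (1 + ck) * ν A < ν (finSMul Tk A ∩ (W \ B)) := by
  have hPY : P ⊆ Y := hPW.trans hWY
  set N : Set X := W \ P with hNdef
  have hNm : MeasurableSet N := hWm.diff hPm
  have hNY : N ⊆ Y := Set.diff_subset.trans hWY
  have hNP : Disjoint N P := Set.disjoint_sdiff_left
  -- the family
  set Fam : Set (Set X × Set X) := {p | MeasurableSet p.1 ∧ MeasurableSet p.2 ∧
    p.1 ⊆ N ∧ p.2 ⊆ P ∧ ν p.1 ≤ ENNReal.ofReal (2 * αk) * ν Y ∧ ν p.2 ≤ ν P / 2 ∧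
    ν (finSMul Tk p.1 ∩ (N ∪ (P \ finSMul Tp p.2))) + ν (finSMul Tp p.2 ∩ P)
      ≤ ENNReal.ofReal (1 + ck) * (ν p.1 + ν p.2)} with hFamdef
  -- apply the maximal pair lemma
  obtain ⟨p, hpF, hmax⟩ := exists_maximal_pair ν Fam
    (by
      refine ⟨MeasurableSet.empty, MeasurableSet.empty, Set.empty_subset _,
        Set.empty_subset _, by simp, by simp, ?_⟩
      simp [finSMul_empty])
    (ν Y + ν Y) (by
      have : ν Y ≠ ⊤ := hYfin
      exact ENNReal.add_ne_top.mpr ⟨this, this⟩)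
    (by
      rintro q ⟨-, -, hq1, hq2, -, -, -⟩
      exact add_le_add (measure_mono (hq1.trans hNY)) (measure_mono (hq2.trans hPY)))
    (by rintro q ⟨h1, h2, -⟩; exact ⟨h1, h2⟩)
    (by
      rintro f hfF hf1 hf2
      have hmono1 : Monotone fun k => (f k).1 := monotone_nat_of_le_succ hf1
      have hmono2 : Monotone fun k => (f k).2 := monotone_nat_of_le_succ hf2
      have hdir1 : Directed (· ⊆ ·) fun k => (f k).1 := hmono1.directed_le
      have hdir2 : Directed (· ⊆ ·) fun k => (f k).2 := hmono2.directed_le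
      refine ⟨MeasurableSet.iUnion (fun k => (hfF k).1),
        MeasurableSet.iUnion (fun k => (hfF k).2.1),
        Set.iUnion_subset (fun k => (hfF k).2.2.1),
        Set.iUnion_subset (fun k => (hfF k).2.2.2.1), ?_, ?_, ?_⟩
      · rw [Directed.measure_iUnion hdir1]
        exact iSup_le fun k => (hfF k).2.2.2.2.1
      · rw [Directed.measure_iUnion hdir2]
        exact iSup_le fun k => (hfF k).2.2.2.2.2.1
      · -- the main inequality passes to the limit
        set Eω := ⋃ k, (f k).1
        set Aω := ⋃ k, (f k).2
        have hzmono : ∀ k, (N ∪ (P \ finSMul Tp Aω)) ⊆ (N ∪ (P \ finSMul Tp (f k).2)) := by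
          intro k
          refine Set.union_subset_union_right _ (Set.diff_subset_diff_right ?_)
          exact finSMul_mono_set (Set.subset_iUnion (fun k => (f k).2) k)
        have hper : ∀ i j, ν (finSMul Tk (f i).1 ∩ (N ∪ (P \ finSMul Tp Aω)))
            + ν (finSMul Tp (f j).2 ∩ P)
            ≤ ENNReal.ofReal (1 + ck) * (ν Eω + ν Aω) := by
          intro i j
          set k := max i j
          have hik : (f i).1 ⊆ (f k).1 := hmono1 (le_max_left i j)
          have hjk : (f j).2 ⊆ (f k).2 := hmono2 (le_max_right i j)
          calc ν (finSMul Tk (f i).1 ∩ (N ∪ (P \ finSMul Tp Aω)))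
                + ν (finSMul Tp (f j).2 ∩ P)
              ≤ ν (finSMul Tk (f k).1 ∩ (N ∪ (P \ finSMul Tp (f k).2)))
                + ν (finSMul Tp (f k).2 ∩ P) := by
                refine add_le_add (measure_mono ?_) (measure_mono ?_)
                · exact Set.inter_subset_inter (finSMul_mono_set hik) (hzmono k)
                · exact Set.inter_subset_inter_left _ (finSMul_mono_set hjk)
            _ ≤ ENNReal.ofReal (1 + ck) * (ν (f k).1 + ν (f k).2) := (hfF k).2.2.2.2.2.2
            _ ≤ ENNReal.ofReal (1 + ck) * (ν Eω + ν Aω) := by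
                refine mul_le_mul_right (add_le_add (measure_mono ?_) (measure_mono ?_)) _
                · exact Set.subset_iUnion (fun k => (f k).1) k
                · exact Set.subset_iUnion (fun k => (f k).2) k
        have he1 : ν (finSMul Tk Eω ∩ (N ∪ (P \ finSMul Tp Aω)))
            = ⨆ k, ν (finSMul Tk (f k).1 ∩ (N ∪ (P \ finSMul Tp Aω))) := by
          have : finSMul Tk Eω ∩ (N ∪ (P \ finSMul Tp Aω))
              = ⋃ k, (finSMul Tk (f k).1 ∩ (N ∪ (P \ finSMul Tp Aω))) := by
            rw [finSMul_iUnion, Set.iUnion_inter]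
          rw [this]
          refine Directed.measure_iUnion ?_
          refine (Monotone.directed_le ?_)
          intro a b hab
          exact Set.inter_subset_inter_left _ (finSMul_mono_set (hmono1 hab))
        have he2 : ν (finSMul Tp Aω ∩ P) = ⨆ k, ν (finSMul Tp (f k).2 ∩ P) := by
          have : finSMul Tp Aω ∩ P = ⋃ k, (finSMul Tp (f k).2 ∩ P) := by
            rw [finSMul_iUnion, Set.iUnion_inter]
          rw [this]
          refine Directed.measure_iUnion ?_
          refine (Monotone.directed_le ?_)
          intro a b hab
          exact Set.inter_subset_inter_left _ (finSMul_mono_set (hmono2 hab))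
        rw [he1, he2]
        exact ENNReal.iSup_add_iSup_le hper)
  have hpF' := hpF
  obtain ⟨hBm, hAsm, hBN, hAsP, hBcap, hAscap, hBineq⟩ := hpF'
  set B := p.1 with hBdef
  set As := p.2 with hAsdef
  -- membership to full-W bound
  have hmemW : ∀ q ∈ Fam, ν (finSMul Tk q.1 ∩ W)
      ≤ ENNReal.ofReal (1 + ck) * (ν q.1 + ν q.2) := by
    rintro q ⟨-, -, -, -, -, -, hq⟩
    refine le_trans ?_ hq
    refine le_trans (measure_mono ?_) (measure_union_le _ _)
    intro x hx
    obtain ⟨hx1, hx2⟩ := hx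
    by_cases hxP : x ∈ P
    · by_cases hxs : x ∈ finSMul Tp q.2
      · exact Or.inr ⟨hxs, hxP⟩
      · exact Or.inl ⟨hx1, Or.inr ⟨hxP, hxs⟩⟩
    · exact Or.inl ⟨hx1, Or.inl ⟨hx2, hxP⟩⟩
  have hadd_mul : ∀ (a b : ℝ), 0 ≤ a → 0 ≤ b → ∀ x : ENNReal,
      ENNReal.ofReal a * x + ENNReal.ofReal b * x = ENNReal.ofReal (a + b) * x := by
    intro a b ha hb x
    rw [ENNReal.ofReal_add ha hb, add_mul]
  have hck1' : (0:ℝ) ≤ 1 + ck := by linarith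
  -- upper bound on the right-hand side of the family inequality
  have hRHSb : ∀ q ∈ Fam, ENNReal.ofReal (1 + ck) * (ν q.1 + ν q.2)
      ≤ ENNReal.ofReal ((1 + ck) * (2 * αk) + (1 + ck) / 2) * ν Y := by
    rintro q ⟨-, -, -, -, hcap1, hcap2, -⟩
    have h1 : ν q.1 + ν q.2 ≤ ENNReal.ofReal (2 * αk) * ν Y + ν Y / 2 := by
      refine add_le_add hcap1 (hcap2.trans ?_)
      exact ENNReal.div_le_div_right (measure_mono hPY) 2
    calc ENNReal.ofReal (1 + ck) * (ν q.1 + ν q.2)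
        ≤ ENNReal.ofReal (1 + ck) * (ENNReal.ofReal (2 * αk) * ν Y + ν Y / 2) :=
          mul_le_mul_right h1 _
      _ = ENNReal.ofReal ((1 + ck) * (2 * αk)) * ν Y
          + ENNReal.ofReal ((1 + ck) / 2) * ν Y := by
          rw [mul_add, ← mul_assoc, ← ENNReal.ofReal_mul hck1', ofReal_mul_half]
      _ = ENNReal.ofReal ((1 + ck) * (2 * αk) + (1 + ck) / 2) * ν Y := by
          rw [hadd_mul _ _ (by nlinarith) (by linarith)]
  -- the maximal bad set is small
  have hBlt : ν B < ENNReal.ofReal αk * ν Y := by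
    by_contra hcon
    push_neg at hcon
    have hampB := hamp B hBm (hBN.trans hNY) hcon
    have hcover : ν (finSMul Tk B ∩ Y) ≤ ν (finSMul Tk B ∩ W) + ν (Y \ W) := by
      refine le_trans (measure_mono ?_) (measure_union_le _ _)
      rintro x ⟨hx1, hx2⟩
      by_cases hxW : x ∈ W
      · exact Or.inl ⟨hx1, hxW⟩
      · exact Or.inr ⟨hx2, hxW⟩
    have hWb := (hmemW p hpF).trans (hRHSb p hpF)
    have hchain : ν Y ≤ ENNReal.ofReal ((1 + ck) * (2 * αk) + (1 + ck) / 2 + u / 32 + αk)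
        * ν Y := by
      calc ν Y ≤ ν (finSMul Tk B ∩ Y) + ENNReal.ofReal αk * ν Y := hampB
        _ ≤ (ν (finSMul Tk B ∩ W) + ν (Y \ W)) + ENNReal.ofReal αk * ν Y :=
            add_le_add_left hcover _
        _ ≤ (ENNReal.ofReal ((1 + ck) * (2 * αk) + (1 + ck) / 2) * ν Y
            + ENNReal.ofReal (u / 32) * ν Y) + ENNReal.ofReal αk * ν Y :=
            add_le_add_left (add_le_add hWb hZsmall) _
        _ = ENNReal.ofReal ((1 + ck) * (2 * αk) + (1 + ck) / 2 + u / 32 + αk) * ν Y := by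
            rw [hadd_mul _ _ (by nlinarith) (by linarith),
              hadd_mul _ _ (by nlinarith) (by linarith)]
    refine contra_coeff hY0 hYfin ?_ hchain
    nlinarith [mul_nonneg hck1' hαk0.le, sq_nonneg u]
  -- the witness is small
  have hAslt : ν As < ENNReal.ofReal αp * ν Y := by
    by_contra hcon
    push_neg at hcon
    have hwAs := hwit As hAsm hAsP hcon
    have hterm2 : ν (finSMul Tp As ∩ P)
        ≤ ENNReal.ofReal (1 + ck) * (ν B + ν As) := le_add_self.trans hBineq
    have hfinal : ENNReal.ofReal (1 - u / 8) * ν Y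
        ≤ ENNReal.ofReal ((1 + ck) * (2 * αk) + (1 + ck) / 2) * ν Y :=
      hwAs.trans (hterm2.trans (hRHSb p hpF))
    have hle := coeff_le_coeff hY0 hYfin (by nlinarith) hfinal
    nlinarith
  refine ⟨B, hBm, hBN, hBlt.le, ?_⟩
  intro A hAm hAV hA0 hAhalf
  by_contra hcon
  push_neg at hcon
  set V : Set X := W \ B with hVdef
  have hVm : MeasurableSet V := hWm.diff hBm
  have hVY : V ⊆ Y := Set.diff_subset.trans hWY
  have hPV : P ⊆ V := by
    intro x hx
    exact ⟨hPW hx, fun hxB => Set.disjoint_left.mp hNP (hBN hxB) hx⟩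
  by_cases hAL : ENNReal.ofReal αk * ν Y ≤ ν A
  · -- large sets expand by amplification
    have hampA := hamp A hAm (hAV.trans hVY) hAL
    have hcover : ν (finSMul Tk A ∩ Y)
        ≤ ν (finSMul Tk A ∩ V) + (ν (Y \ W) + ν B) := by
      refine le_trans (measure_mono ?_) ((measure_union_le _ _).trans
        (add_le_add_right (measure_union_le _ _) _))
      rintro x ⟨hx1, hx2⟩
      by_cases hxW : x ∈ W
      · by_cases hxB : x ∈ B
        · exact Or.inr (Or.inr hxB)
        · exact Or.inl ⟨hx1, hxW, hxB⟩
      · exact Or.inr (Or.inl ⟨hx2, hxW⟩)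
    have hAY2 : ν A ≤ ν Y / 2 :=
      hAhalf.trans (ENNReal.div_le_div_right (measure_mono hVY) 2)
    have hconY : ν (finSMul Tk A ∩ V) ≤ ENNReal.ofReal ((1 + ck) / 2) * ν Y := by
      refine hcon.trans ?_
      calc ENNReal.ofReal (1 + ck) * ν A ≤ ENNReal.ofReal (1 + ck) * (ν Y / 2) :=
            mul_le_mul_right hAY2 _
        _ = ENNReal.ofReal ((1 + ck) / 2) * ν Y := ofReal_mul_half _
    have hchain : ν Y ≤ ENNReal.ofReal ((1 + ck) / 2 + u / 32 + αk + αk) * ν Y := by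
      calc ν Y ≤ ν (finSMul Tk A ∩ Y) + ENNReal.ofReal αk * ν Y := hampA
        _ ≤ (ν (finSMul Tk A ∩ V) + (ν (Y \ W) + ν B)) + ENNReal.ofReal αk * ν Y :=
            add_le_add_left hcover _
        _ ≤ (ENNReal.ofReal ((1 + ck) / 2) * ν Y + (ENNReal.ofReal (u / 32) * ν Y
            + ENNReal.ofReal αk * ν Y)) + ENNReal.ofReal αk * ν Y := by
            refine add_le_add_left (add_le_add hconY (add_le_add hZsmall hBlt.le)) _
        _ = ENNReal.ofReal ((1 + ck) / 2 + u / 32 + αk + αk) * ν Y := by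
            rw [hadd_mul (u/32) αk (by linarith) hαk0.le,
              hadd_mul ((1+ck)/2) (u/32 + αk) (by linarith) (by linarith),
              hadd_mul ((1+ck)/2 + (u/32 + αk)) αk (by linarith) hαk0.le]
            congr 1
            ring
    refine contra_coeff hY0 hYfin ?_ hchain
    nlinarith
  · push_neg at hAL
    set A1 : Set X := A ∩ P with hA1def
    set A2 : Set X := A \ P with hA2def
    have hA1m : MeasurableSet A1 := hAm.inter hPm
    have hA2m : MeasurableSet A2 := hAm.diff hPm
    have hA1P : A1 ⊆ P := Set.inter_subset_right
    have hA2NB : A2 ⊆ N \ B := by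
      rintro x ⟨hxA, hxP⟩
      have hxV := hAV hxA
      exact ⟨⟨hxV.1, hxP⟩, hxV.2⟩
    have hsplit : ν A1 + ν A2 = ν A := measure_inter_add_diff A hPm
    have hA1A : ν A1 ≤ ν A := measure_mono Set.inter_subset_left
    have hA2A : ν A2 ≤ ν A := measure_mono Set.diff_subset
    -- inequality (ii)
    have hii : ν (finSMul Tk A2 ∩ ((N \ B) ∪ (P \ finSMul Tp A1)))
        + ν (finSMul Tp A1 ∩ P) ≤ ENNReal.ofReal (1 + ck) * (ν A2 + ν A1) := by
      have hsA1A : finSMul Tp A1 ⊆ finSMul Tk A :=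
        (finSMul_mono_set Set.inter_subset_left).trans (finSMul_mono_finset hTpk)
      have hsub1 : finSMul Tp A1 ∩ P ⊆ finSMul Tk A ∩ V :=
        Set.inter_subset_inter hsA1A hPV
      have hsub2 : finSMul Tk A2 ∩ (P \ finSMul Tp A1) ⊆ finSMul Tk A ∩ V :=
        Set.inter_subset_inter (finSMul_mono_set Set.diff_subset)
          (Set.diff_subset.trans hPV)
      have hsub3 : finSMul Tk A2 ∩ (N \ B) ⊆ finSMul Tk A ∩ V := by
        refine Set.inter_subset_inter (finSMul_mono_set Set.diff_subset) ?_
        rintro x ⟨hxN, hxB⟩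
        exact ⟨hxN.1, hxB⟩
      have hd12 : Disjoint (finSMul Tp A1 ∩ P) (finSMul Tk A2 ∩ (P \ finSMul Tp A1)) := by
        rw [Set.disjoint_left]
        rintro x ⟨hx1, -⟩ ⟨-, -, hx2⟩
        exact hx2 hx1
      have hd3 : Disjoint ((finSMul Tp A1 ∩ P) ∪ (finSMul Tk A2 ∩ (P \ finSMul Tp A1)))
          (finSMul Tk A2 ∩ (N \ B)) := by
        rw [Set.disjoint_left]
        rintro x hx ⟨-, hxN, -⟩
        have hxP : x ∈ P := by
          rcases hx with ⟨-, h⟩ | ⟨-, h, -⟩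
          · exact h
          · exact h
        exact Set.disjoint_left.mp hNP hxN hxP
      have hmA2z1 : MeasurableSet (finSMul Tk A2 ∩ (P \ finSMul Tp A1)) :=
        (measurable_finSMul hmeas hA2m).inter (hPm.diff (measurable_finSMul hmeas hA1m))
      have hmA2z2 : MeasurableSet (finSMul Tk A2 ∩ (N \ B)) :=
        (measurable_finSMul hmeas hA2m).inter (hNm.diff hBm)
      have hmeasu : ν ((finSMul Tp A1 ∩ P) ∪ (finSMul Tk A2 ∩ (P \ finSMul Tp A1))
          ∪ (finSMul Tk A2 ∩ (N \ B)))
          = ν (finSMul Tp A1 ∩ P) + ν (finSMul Tk A2 ∩ (P \ finSMul Tp A1))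
            + ν (finSMul Tk A2 ∩ (N \ B)) := by
        rw [measure_union hd3 hmA2z2, measure_union hd12 hmA2z1]
      calc ν (finSMul Tk A2 ∩ ((N \ B) ∪ (P \ finSMul Tp A1))) + ν (finSMul Tp A1 ∩ P)
          ≤ (ν (finSMul Tk A2 ∩ (N \ B)) + ν (finSMul Tk A2 ∩ (P \ finSMul Tp A1)))
            + ν (finSMul Tp A1 ∩ P) := by
            refine add_le_add_left ?_ _
            rw [Set.inter_union_distrib_left]
            exact measure_union_le _ _
        _ = ν (finSMul Tp A1 ∩ P) + ν (finSMul Tk A2 ∩ (P \ finSMul Tp A1))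
            + ν (finSMul Tk A2 ∩ (N \ B)) := by ring
        _ = ν ((finSMul Tp A1 ∩ P) ∪ (finSMul Tk A2 ∩ (P \ finSMul Tp A1))
            ∪ (finSMul Tk A2 ∩ (N \ B))) := hmeasu.symm
        _ ≤ ν (finSMul Tk A ∩ V) :=
            measure_mono (Set.union_subset (Set.union_subset hsub1 hsub2) hsub3)
        _ ≤ ENNReal.ofReal (1 + ck) * ν A := hcon
        _ = ENNReal.ofReal (1 + ck) * (ν A2 + ν A1) := by rw [add_comm (ν A2), hsplit]
    -- caps for the combined pair
    have hq1cap : ν (B ∪ A2) ≤ ENNReal.ofReal (2 * αk) * ν Y := by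
      calc ν (B ∪ A2) ≤ ν B + ν A2 := measure_union_le _ _
        _ ≤ ENNReal.ofReal αk * ν Y + ENNReal.ofReal αk * ν Y :=
            add_le_add hBlt.le ((hA2A.trans_lt hAL).le)
        _ = ENNReal.ofReal (αk + αk) * ν Y := hadd_mul _ _ hαk0.le hαk0.le _
        _ = ENNReal.ofReal (2 * αk) * ν Y := by rw [show αk + αk = 2 * αk by ring]
    have hAcapp : ν A ≤ ENNReal.ofReal αp * ν Y :=
      hAL.le.trans (mul_le_mul_left (ENNReal.ofReal_le_ofReal hαkp) _)
    have hA1cap : ν A1 ≤ ENNReal.ofReal αp * ν Y := hA1A.trans hAcapp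
    have hq2cap : ν (As ∪ A1) ≤ ν P / 2 := hsmall As A1 hAsP hA1P hAslt.le hA1cap
    -- overlap recovery
    have hOm : MeasurableSet (As ∩ A1) := hAsm.inter hA1m
    have hOP : (As ∩ A1) ⊆ P := Set.inter_subset_left.trans hAsP
    have hOX : ENNReal.ofReal (1 + ck) * ν (As ∩ A1)
        ≤ ν (finSMul Tp As ∩ finSMul Tp A1 ∩ P) := by
      by_cases hO0 : ν (As ∩ A1) = 0
      · simp [hO0]
      · have hOcap : ν (As ∩ A1) ≤ ENNReal.ofReal αp * ν Y :=
          (measure_mono Set.inter_subset_left).trans hAslt.le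
        have hOsize : ν (As ∩ A1) ≤ ν P / 2 := by
          have := hsmall (As ∩ A1) (As ∩ A1) hOP hOP hOcap hOcap
          rwa [Set.union_self] at this
        have hOexp := hexpP (As ∩ A1) hOm hOP (pos_iff_ne_zero.mpr hO0) hOsize
        have hOsub : finSMul Tp (As ∩ A1) ∩ P ⊆ finSMul Tp As ∩ finSMul Tp A1 ∩ P :=
          Set.inter_subset_inter_left _ (Set.subset_inter
            (finSMul_mono_set Set.inter_subset_left)
            (finSMul_mono_set Set.inter_subset_right))
        calc ENNReal.ofReal (1 + ck) * ν (As ∩ A1)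
            ≤ ENNReal.ofReal (1 + cp) * ν (As ∩ A1) :=
              mul_le_mul_left (ENNReal.ofReal_le_ofReal (by linarith)) _
          _ ≤ ν (finSMul Tp (As ∩ A1) ∩ P) := hOexp.le
          _ ≤ ν (finSMul Tp As ∩ finSMul Tp A1 ∩ P) := measure_mono hOsub
    -- the combined pair satisfies the family inequality
    have hXfin : ν (finSMul Tp As ∩ finSMul Tp A1 ∩ P) ≠ ⊤ :=
      ne_top_of_le_ne_top hYfin (measure_mono (Set.inter_subset_right.trans hPY))
    have ha : ν (finSMul Tp (As ∪ A1) ∩ P) + ν (finSMul Tp As ∩ finSMul Tp A1 ∩ P)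
        = ν (finSMul Tp As ∩ P) + ν (finSMul Tp A1 ∩ P) := by
      have hset1 : (finSMul Tp As ∩ P) ∪ (finSMul Tp A1 ∩ P) = finSMul Tp (As ∪ A1) ∩ P := by
        rw [finSMul_union]
        exact (Set.union_inter_distrib_right _ _ _).symm
      have hset2 : (finSMul Tp As ∩ P) ∩ (finSMul Tp A1 ∩ P)
          = finSMul Tp As ∩ finSMul Tp A1 ∩ P := by
        ext x
        simp only [Set.mem_inter_iff]
        tauto
      have := measure_union_add_inter (μ := ν) (t := finSMul Tp A1 ∩ P)
        (finSMul Tp As ∩ P) ((measurable_finSMul hmeas hA1m).inter hPm)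
      rwa [hset1, hset2] at this
    have hb : ν (finSMul Tk (B ∪ A2) ∩ (N ∪ (P \ finSMul Tp (As ∪ A1))))
        ≤ ν (finSMul Tk B ∩ (N ∪ (P \ finSMul Tp As)))
          + ν (finSMul Tk A2 ∩ ((N \ B) ∪ (P \ finSMul Tp A1))) := by
      refine le_trans (measure_mono ?_) (measure_union_le _ _)
      intro x hx
      rw [finSMul_union] at hx
      obtain ⟨hx1, hx2⟩ := hx
      rcases hx1 with hxB | hxA2
      · refine Or.inl ⟨hxB, ?_⟩
        rcases hx2 with hxN | ⟨hxP, hxs⟩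
        · exact Or.inl hxN
        · exact Or.inr ⟨hxP, fun hs => hxs (by
            rw [finSMul_union]
            exact Or.inl hs)⟩
      · by_cases hxB' : x ∈ finSMul Tk B
        · refine Or.inl ⟨hxB', ?_⟩
          rcases hx2 with hxN | ⟨hxP, hxs⟩
          · exact Or.inl hxN
          · exact Or.inr ⟨hxP, fun hs => hxs (by
              rw [finSMul_union]
              exact Or.inl hs)⟩
        · refine Or.inr ⟨hxA2, ?_⟩
          rcases hx2 with hxN | ⟨hxP, hxs⟩
          · exact Or.inl ⟨hxN, fun hxB'' => hxB' (subset_finSMul hTk1 hxB'')⟩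
          · exact Or.inr ⟨hxP, fun hs => hxs (by
              rw [finSMul_union]
              exact Or.inr hs)⟩
    have hBA2 : ν (B ∪ A2) = ν B + ν A2 := by
      refine measure_union ?_ hA2m
      rw [Set.disjoint_left]
      intro x hxB hxA2
      exact (hA2NB hxA2).2 hxB
    have hAA1 : ν (As ∪ A1) + ν (As ∩ A1) = ν As + ν A1 :=
      measure_union_add_inter As hA1m
    have hqineq : ν (finSMul Tk (B ∪ A2) ∩ (N ∪ (P \ finSMul Tp (As ∪ A1))))
        + ν (finSMul Tp (As ∪ A1) ∩ P)
        ≤ ENNReal.ofReal (1 + ck) * (ν (B ∪ A2) + ν (As ∪ A1)) := by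
      refine cancel_right hXfin ?_
      calc ν (finSMul Tk (B ∪ A2) ∩ (N ∪ (P \ finSMul Tp (As ∪ A1))))
          + ν (finSMul Tp (As ∪ A1) ∩ P) + ν (finSMul Tp As ∩ finSMul Tp A1 ∩ P)
          = ν (finSMul Tk (B ∪ A2) ∩ (N ∪ (P \ finSMul Tp (As ∪ A1))))
            + (ν (finSMul Tp (As ∪ A1) ∩ P) + ν (finSMul Tp As ∩ finSMul Tp A1 ∩ P)) := by
            ring
        _ = ν (finSMul Tk (B ∪ A2) ∩ (N ∪ (P \ finSMul Tp (As ∪ A1))))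
            + (ν (finSMul Tp As ∩ P) + ν (finSMul Tp A1 ∩ P)) := by rw [ha]
        _ ≤ (ν (finSMul Tk B ∩ (N ∪ (P \ finSMul Tp As)))
            + ν (finSMul Tk A2 ∩ ((N \ B) ∪ (P \ finSMul Tp A1))))
            + (ν (finSMul Tp As ∩ P) + ν (finSMul Tp A1 ∩ P)) := add_le_add_left hb _
        _ = (ν (finSMul Tk B ∩ (N ∪ (P \ finSMul Tp As))) + ν (finSMul Tp As ∩ P))
            + (ν (finSMul Tk A2 ∩ ((N \ B) ∪ (P \ finSMul Tp A1)))
            + ν (finSMul Tp A1 ∩ P)) := by ring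
        _ ≤ ENNReal.ofReal (1 + ck) * (ν B + ν As)
            + ENNReal.ofReal (1 + ck) * (ν A2 + ν A1) := add_le_add hBineq hii
        _ = ENNReal.ofReal (1 + ck) * ((ν B + ν A2) + (ν As + ν A1)) := by ring
        _ = ENNReal.ofReal (1 + ck) * (ν (B ∪ A2) + (ν (As ∪ A1) + ν (As ∩ A1))) := by
            rw [hBA2, hAA1]
        _ = ENNReal.ofReal (1 + ck) * (ν (B ∪ A2) + ν (As ∪ A1))
            + ENNReal.ofReal (1 + ck) * ν (As ∩ A1) := by ring
        _ ≤ ENNReal.ofReal (1 + ck) * (ν (B ∪ A2) + ν (As ∪ A1))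
            + ν (finSMul Tp As ∩ finSMul Tp A1 ∩ P) := add_le_add_right hOX _
    have hqF : (B ∪ A2, As ∪ A1) ∈ Fam := by
      refine ⟨hBm.union hA2m, hAsm.union hA1m, ?_, Set.union_subset hAsP hA1P,
        hq1cap, hq2cap, hqineq⟩
      exact Set.union_subset hBN (hA2NB.trans Set.diff_subset)
    have hzero := hmax (B ∪ A2, As ∪ A1) hqF Set.subset_union_left Set.subset_union_left
    have hA2zero : ν A2 = 0 := by
      have h := hzero.1
      have hsub : A2 ⊆ (B ∪ A2) \ B := by
        intro x hx
        exact ⟨Or.inr hx, fun hxB => (hA2NB hx).2 hxB⟩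
      exact le_antisymm ((measure_mono hsub).trans h.le) zero_le
    have hA1eq : ν A1 = ν A := by
      rw [← hsplit, hA2zero, add_zero]
    have hA1pos : 0 < ν A1 := hA1eq ▸ hA0
    have hA1half : ν A1 ≤ ν P / 2 := by
      have := hsmall A1 A1 hA1P hA1P hA1cap hA1cap
      rwa [Set.union_self] at this
    have hexpA1 := hexpP A1 hA1m hA1P hA1pos hA1half
    have hchain : ν (finSMul Tp A1 ∩ P) ≤ ENNReal.ofReal (1 + cp) * ν A1 := by
      calc ν (finSMul Tp A1 ∩ P) ≤ ν (finSMul Tk A ∩ V) := by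
            refine measure_mono (Set.inter_subset_inter ?_ hPV)
            exact (finSMul_mono_set Set.inter_subset_left).trans (finSMul_mono_finset hTpk)
        _ ≤ ENNReal.ofReal (1 + ck) * ν A := hcon
        _ = ENNReal.ofReal (1 + ck) * ν A1 := by rw [hA1eq]
        _ ≤ ENNReal.ofReal (1 + cp) * ν A1 :=
            mul_le_mul_left (ENNReal.ofReal_le_ofReal (by linarith)) _
    exact absurd hchain (not_le.mpr hexpA1)

end Stage

end AuxExp

namespace AuxExp

section StageFull

variable {Γ X : Type*} [Group Γ] [MulAction Γ X] [MeasurableSpace X]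

lemma stage_full (ν : Measure X)
    (hmeas : ∀ γ : Γ, Measurable fun x : X => γ • x)
    (Y : Set X) (hYm : MeasurableSet Y) (hY0 : ν Y ≠ 0) (hYfin : ν Y ≠ ⊤)
    (u ck cp αk αp : ℝ)
    (hu : 0 < u) (hu1 : u ≤ 1)
    (hαk0 : 0 < αk) (hαkp : αk ≤ αp) (hαp : αp ≤ u/32)
    (hck0 : 0 ≤ ck) (hckp : ck ≤ cp) (hck1 : ck ≤ 1 - u)
    (W P : Set X) (hWm : MeasurableSet W) (hWY : W ⊆ Y)
    (hZsmall : ν (Y \ W) ≤ ENNReal.ofReal (u/32) * ν Y)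
    (hPm : MeasurableSet P) (hPW : P ⊆ W)
    (Tp Tk : Finset Γ) (hTpk : Tp ⊆ Tk) (hTk1 : (1:Γ) ∈ Tk)
    (hexpP : ∀ A : Set X, MeasurableSet A → A ⊆ P → 0 < ν A → ν A ≤ ν P / 2 →
      ENNReal.ofReal (1 + cp) * ν A < ν (finSMul Tp A ∩ P))
    (hwit : ∀ A : Set X, MeasurableSet A → A ⊆ P → ENNReal.ofReal αp * ν Y ≤ ν A →
      ENNReal.ofReal (1 - u/8) * ν Y ≤ ν (finSMul Tp A ∩ P))
    (hsmall : ∀ A B : Set X, A ⊆ P → B ⊆ P → ν A ≤ ENNReal.ofReal αp * ν Y →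
      ν B ≤ ENNReal.ofReal αp * ν Y → ν (A ∪ B) ≤ ν P / 2)
    (hamp : ∀ E : Set X, MeasurableSet E → E ⊆ Y → ENNReal.ofReal αk * ν Y ≤ ν E →
      ν Y ≤ ν (finSMul Tk E ∩ Y) + ENNReal.ofReal αk * ν Y) :
    ∃ V : Set X, MeasurableSet V ∧ V ⊆ W ∧ P ⊆ V ∧
      (ν Y ≤ ν V + (ν (Y \ W) + ENNReal.ofReal αk * ν Y)) ∧
      (∀ A : Set X, MeasurableSet A → A ⊆ V → 0 < ν A → ν A ≤ ν V / 2 →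
        ENNReal.ofReal (1 + ck) * ν A < ν (finSMul Tk A ∩ V)) ∧
      (∀ A : Set X, MeasurableSet A → A ⊆ V → ENNReal.ofReal αk * ν Y ≤ ν A →
        ENNReal.ofReal (1 - u/8) * ν Y ≤ ν (finSMul Tk A ∩ V)) := by
  obtain ⟨B, hBm, hBN, hBsmall, hBexp⟩ := stage_lemma ν hmeas Y hYm hY0 hYfin
    u ck cp αk αp hu hu1 hαk0 hαkp hαp hck0 hckp hck1 W P hWm hWY hZsmall hPm hPW
    Tp Tk hTpk hTk1 hexpP hwit hsmall hamp
  set V : Set X := W \ B with hVdef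
  have hVm : MeasurableSet V := hWm.diff hBm
  have hVW : V ⊆ W := Set.diff_subset
  have hVY : V ⊆ Y := hVW.trans hWY
  have hPV : P ⊆ V := by
    intro x hx
    exact ⟨hPW hx, fun hxB => (hBN hxB).2 hx⟩
  have hcoverY : ∀ (G : Set X), G ∩ Y ⊆ (G ∩ V) ∪ ((Y \ W) ∪ B) := by
    rintro G x ⟨hx1, hx2⟩
    by_cases hxW : x ∈ W
    · by_cases hxB : x ∈ B
      · exact Or.inr (Or.inr hxB)
      · exact Or.inl ⟨hx1, hxW, hxB⟩
    · exact Or.inr (Or.inl ⟨hx2, hxW⟩)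
  have hdef : ν Y ≤ ν V + (ν (Y \ W) + ENNReal.ofReal αk * ν Y) := by
    have hYsub : Y ⊆ V ∪ ((Y \ W) ∪ B) := by
      intro x hx
      have := hcoverY Y ⟨hx, hx⟩
      rcases this with h | h
      · exact Or.inl h.2
      · exact Or.inr h
    calc ν Y ≤ ν (V ∪ ((Y \ W) ∪ B)) := measure_mono hYsub
      _ ≤ ν V + ν ((Y \ W) ∪ B) := measure_union_le _ _
      _ ≤ ν V + (ν (Y \ W) + ν B) := add_le_add_right (measure_union_le _ _) _
      _ ≤ ν V + (ν (Y \ W) + ENNReal.ofReal αk * ν Y) := by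
          exact add_le_add_right (add_le_add_right hBsmall _) _
  refine ⟨V, hVm, hVW, hPV, hdef, hBexp, ?_⟩
  intro A hAm hAV hAlow
  have h1 := hamp A hAm (hAV.trans hVY) hAlow
  have hcov : ν (finSMul Tk A ∩ Y) ≤ ν (finSMul Tk A ∩ V) + (ν (Y \ W) + ν B) :=
    le_trans (measure_mono (hcoverY _)) ((measure_union_le _ _).trans
      (add_le_add_right (measure_union_le _ _) _))
  have h2 : ν Y ≤ ν (finSMul Tk A ∩ V) + ENNReal.ofReal (u/32 + αk + αk) * ν Y := by
    calc ν Y ≤ ν (finSMul Tk A ∩ Y) + ENNReal.ofReal αk * ν Y := h1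
      _ ≤ (ν (finSMul Tk A ∩ V) + (ν (Y \ W) + ν B)) + ENNReal.ofReal αk * ν Y :=
          add_le_add_left hcov _
      _ ≤ (ν (finSMul Tk A ∩ V) + (ENNReal.ofReal (u/32) * ν Y
          + ENNReal.ofReal αk * ν Y)) + ENNReal.ofReal αk * ν Y :=
          add_le_add_left (add_le_add_right (add_le_add hZsmall hBsmall) _) _
      _ = ν (finSMul Tk A ∩ V) + ENNReal.ofReal (u/32 + αk + αk) * ν Y := by
          rw [ENNReal.ofReal_add (by linarith) hαk0.le, ENNReal.ofReal_add (by linarith) hαk0.le]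
          rw [add_mul, add_mul]
          ring
  have h3 := split_coeff hYfin (by linarith) (by linarith) h2
  refine le_trans ?_ h3
  refine mul_le_mul_left (ENNReal.ofReal_le_ofReal ?_) _
  linarith

end StageFull

end AuxExp


open AuxExp

/-- Proposition 4.5: a domain of asymptotic expansion admits an
exhaustion by domains of `(c,S_n)`-expansion avoiding a prescribed shrinking sequence of
subsets. -/
theorem exhaustion_by_expansion_domains_avoiding
    {Γ X : Type*} [Group Γ] [Countable Γ] [MulAction Γ X] [MeasurableSpace X]
    (ν : Measure X)
    (hmeas : ∀ γ : Γ, Measurable fun x : X => γ • x)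
    (Y : Set X) (hYm : MeasurableSet Y) (hY0 : 0 < ν Y) (hYfin : ν Y < ⊤)
    (hdom : AsymExpDomain Γ ν Y)
    (c : ℝ) (hc0 : 0 < c) (hc1 : c < 1)
    (Z : ℕ → Set X) (hZm : ∀ n, MeasurableSet (Z n)) (hZsub : ∀ n, Z n ⊆ Y)
    (hZdec : Antitone Z)
    (hZ0 : Filter.Tendsto (fun n => ν (Z n)) Filter.atTop (nhds 0)) :
    ∃ N₀ : ℕ, ∃ S : ℕ → Finset Γ, ∃ Yseq : ℕ → Set X,
      (∀ m n : ℕ, N₀ < m → m ≤ n → Yseq m ⊆ Yseq n) ∧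
      (∀ n : ℕ, N₀ < n → MeasurableSet (Yseq n) ∧ Yseq n ⊆ Y \ Z n ∧
        0 < ν (Yseq n) ∧ SymmFin (S n) ∧ ExpandsOn ν (Yseq n) c (S n)) ∧
      ν (Y \ ⋃ n, ⋃ (_ : N₀ < n), Yseq n) = 0 := by
  classical
  have hY0' : ν Y ≠ 0 := hY0.ne'
  have hYfin' : ν Y ≠ ⊤ := hYfin.ne
  set u : ℝ := (1 - c) / 2 with hu_def
  have hu : 0 < u := by rw [hu_def]; linarith
  have hu1 : u ≤ 1 := by rw [hu_def]; linarith
  set γf : ℕ → ℝ := fun k => c + u / 2 ^ (k + 1) with hγdef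
  set αf : ℕ → ℝ := fun k => u / 32 * (1 / 2) ^ k with hαdef
  have hpow_pos : ∀ k : ℕ, (0:ℝ) < (1/2) ^ k := fun k => by positivity
  have hpow_le : ∀ k : ℕ, ((1:ℝ)/2) ^ k ≤ 1 := fun k =>
    pow_le_one₀ (by norm_num) (by norm_num)
  have hγgec : ∀ k, c ≤ γf k := by
    intro k
    rw [hγdef]
    have : (0:ℝ) < u / 2 ^ (k+1) := by positivity
    linarith
  have hγ0 : ∀ k, 0 ≤ γf k := fun k => le_trans hc0.le (hγgec k)
  have hγmono : ∀ k, γf (k+1) ≤ γf k := by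
    intro k
    rw [hγdef]
    simp only
    have h1 : (2:ℝ) ^ (k+1) ≤ 2 ^ (k+2) := by
      apply pow_le_pow_right₀ (by norm_num)
      omega
    have h2 : (0:ℝ) < 2 ^ (k+1) := by positivity
    have := div_le_div_of_nonneg_left hu.le h2 h1
    linarith
  have hγub : ∀ k, γf k ≤ 1 - u := by
    intro k
    rw [hγdef]
    simp only
    have h2 : (1:ℝ) ≤ 2 ^ (k+1) := one_le_pow₀ (by norm_num)
    have : u / 2 ^ (k+1) ≤ u := by
      apply div_le_self hu.le h2
    have hcu : c + u = 1 - u := by rw [hu_def]; ring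
    linarith
  have hαpos : ∀ k, 0 < αf k := by
    intro k
    rw [hαdef]
    positivity
  have hαmono : ∀ k, αf (k+1) ≤ αf k := by
    intro k
    rw [hαdef]
    simp only [pow_succ]
    nlinarith [hpow_pos k, mul_nonneg (by positivity : (0:ℝ) ≤ u/32) (hpow_pos k).le]
  have hαub : ∀ k, αf k ≤ u / 32 := by
    intro k
    rw [hαdef]
    simp only
    nlinarith [hpow_le k, hpow_pos k]
  have hαhalf : ∀ k, αf k ≤ 1 / 2 := fun k => by
    have := hαub k
    linarith
  -- choice of N₀
  have hεpos : (0:ENNReal) < ENNReal.ofReal (u/32) * ν Y := by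
    refine ENNReal.mul_pos ?_ hY0'
    simp only [ne_eq, ENNReal.ofReal_eq_zero, not_le]
    linarith
  obtain ⟨N₀, hN₀⟩ := ENNReal.tendsto_atTop_zero.mp hZ0 _ hεpos
  set n0 : ℕ := N₀ + 1 with hn0def
  -- amplification sets
  have hampex : ∀ k : ℕ, ∃ S : Finset Γ, SymmFin S ∧ ∀ E : Set X, MeasurableSet E →
      E ⊆ Y → ENNReal.ofReal (αf k) * ν Y ≤ ν E →
      ν Y ≤ ν (finSMul S E ∩ Y) + ENNReal.ofReal (αf k) * ν Y := fun k =>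
    amp_lemma ν hmeas Y hYm hY0' hYfin' hdom (αf k) (hαpos k) (hαhalf k)
  choose ampS hampSym hampProp using hampex
  set Tf : ℕ → Finset Γ := fun k => Nat.rec (ampS 0) (fun k Tk => Tk ∪ ampS (k+1)) k
    with hTdef
  have hTs : ∀ k, Tf (k+1) = Tf k ∪ ampS (k+1) := fun k => rfl
  have hTsym : ∀ k, SymmFin (Tf k) := by
    intro k
    induction k with
    | zero => exact hampSym 0
    | succ k ih =>
      rw [hTs]
      exact symmFin_union ih (hampSym (k+1))
  have hTmono : ∀ k, Tf k ⊆ Tf (k+1) := by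
    intro k
    rw [hTs]
    exact Finset.subset_union_left
  have hampT : ∀ k, ampS k ⊆ Tf k := by
    intro k
    cases k with
    | zero => exact subset_rfl
    | succ k =>
      rw [hTs]
      exact Finset.subset_union_right
  have hampPropT : ∀ k, ∀ E : Set X, MeasurableSet E → E ⊆ Y →
      ENNReal.ofReal (αf k) * ν Y ≤ ν E →
      ν Y ≤ ν (finSMul (Tf k) E ∩ Y) + ENNReal.ofReal (αf k) * ν Y := by
    intro k E hEm hEY hElow
    refine (hampProp k E hEm hEY hElow).trans (add_le_add_left (measure_mono ?_) _)
    exact Set.inter_subset_inter_left _ (finSMul_mono_finset (hampT k))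
  -- the invariant
  set StP : ℕ → Set X → Prop := fun k V =>
    MeasurableSet V ∧ V ⊆ Y \ Z (k + n0) ∧
    (ν Y ≤ ν V + (ν (Z (k + n0)) + ENNReal.ofReal (αf k) * ν Y)) ∧
    (∀ A : Set X, MeasurableSet A → A ⊆ V → 0 < ν A → ν A ≤ ν V / 2 →
      ENNReal.ofReal (1 + γf k) * ν A < ν (finSMul (Tf k) A ∩ V)) ∧
    (∀ A : Set X, MeasurableSet A → A ⊆ V → ENNReal.ofReal (αf k) * ν Y ≤ ν A →
      ENNReal.ofReal (1 - u / 8) * ν Y ≤ ν (finSMul (Tf k) A ∩ V)) with hStPdef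
  have hWm : ∀ k : ℕ, MeasurableSet (Y \ Z (k + n0)) := fun k => hYm.diff (hZm _)
  have hWY : ∀ k : ℕ, Y \ Z (k + n0) ⊆ Y := fun k => Set.diff_subset
  have hZsm : ∀ k : ℕ, ν (Y \ (Y \ Z (k + n0))) ≤ ENNReal.ofReal (u/32) * ν Y := by
    intro k
    refine le_trans (measure_mono ?_) (hN₀ (k + n0) (by omega))
    intro x hx
    simp only [Set.mem_diff, not_and, not_not] at hx
    exact hx.2 hx.1
  -- base stage
  obtain ⟨V0, hV0m, hV0W, -, hV0def, hV0exp, hV0wit⟩ :=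
    stage_full ν hmeas Y hYm hY0' hYfin' u (γf 0) (γf 0) (αf 0) (αf 0) hu hu1
      (hαpos 0) le_rfl (hαub 0) (hγ0 0) le_rfl (hγub 0)
      (Y \ Z (0 + n0)) ∅ (hWm 0) (hWY 0) (hZsm 0) MeasurableSet.empty
      (Set.empty_subset _) (Tf 0) (Tf 0) subset_rfl (hTsym 0).1
      (by
        intro A hAm hAsub hApos _
        rw [Set.subset_empty_iff] at hAsub
        rw [hAsub] at hApos
        simp at hApos)
      (by
        intro A hAm hAsub hAlow
        rw [Set.subset_empty_iff] at hAsub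
        rw [hAsub] at hAlow
        simp only [measure_empty, nonpos_iff_eq_zero] at hAlow
        exfalso
        have : (0:ENNReal) < ENNReal.ofReal (αf 0) * ν Y := by
          refine ENNReal.mul_pos ?_ hY0'
          simp only [ne_eq, ENNReal.ofReal_eq_zero, not_le]
          exact hαpos 0
        rw [hAlow] at this
        exact lt_irrefl _ this)
      (by
        intro A B hA hB _ _
        rw [Set.subset_empty_iff] at hA hB
        rw [hA, hB]
        simp)
      (hampPropT 0)
  have hV0St : StP 0 V0 := by
    refine ⟨hV0m, hV0W, ?_, hV0exp, hV0wit⟩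
    refine hV0def.trans (add_le_add_right (add_le_add_left (measure_mono ?_) _) _)
    intro x hx
    simp only [Set.mem_diff, not_and, not_not] at hx
    exact hx.2 hx.1
  -- inductive step
  have hstepex : ∀ (k : ℕ) (Vp : {V : Set X // StP k V}),
      ∃ V : {V : Set X // StP (k+1) V}, Vp.1 ⊆ V.1 := by
    rintro k ⟨Vp, hVm', hVsub, hVdef, hVexp, hVwit⟩
    have hVpY : Vp ⊆ Y := hVsub.trans Set.diff_subset
    have hVplow : ENNReal.ofReal (1 - (u/32 + u/32)) * ν Y ≤ ν Vp := by
      refine split_coeff hYfin' (by linarith) (by linarith) ?_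
      refine hVdef.trans (add_le_add_right ?_ _)
      calc ν (Z (k + n0)) + ENNReal.ofReal (αf k) * ν Y
          ≤ ENNReal.ofReal (u/32) * ν Y + ENNReal.ofReal (u/32) * ν Y := by
            refine add_le_add (hN₀ (k + n0) (by omega)) ?_
            exact mul_le_mul_left (ENNReal.ofReal_le_ofReal (hαub k)) _
        _ = ENNReal.ofReal (u/32 + u/32) * ν Y := by
            rw [ENNReal.ofReal_add (by linarith) (by linarith), add_mul]
    have hsmall' : ∀ A B : Set X, A ⊆ Vp → B ⊆ Vp → ν A ≤ ENNReal.ofReal (αf k) * ν Y →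
        ν B ≤ ENNReal.ofReal (αf k) * ν Y → ν (A ∪ B) ≤ ν Vp / 2 := by
      intro A B hA hB hAc hBc
      have h1 : ν (A ∪ B) ≤ ENNReal.ofReal (αf k + αf k) * ν Y := by
        refine (measure_union_le _ _).trans ?_
        rw [ENNReal.ofReal_add (hαpos k).le (hαpos k).le, add_mul]
        exact add_le_add hAc hBc
      have h2 : ENNReal.ofReal (αf k + αf k) * ν Y
          ≤ ENNReal.ofReal ((1 - (u/32 + u/32)) / 2) * ν Y := by
        refine mul_le_mul_left (ENNReal.ofReal_le_ofReal ?_) _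
        have := hαub k
        linarith
      have h3 : ENNReal.ofReal ((1 - (u/32 + u/32)) / 2) * ν Y ≤ ν Vp / 2 := by
        have hdiv := ENNReal.div_le_div_right hVplow 2
        refine le_trans (le_of_eq ?_) hdiv
        rw [← ofReal_mul_half, mul_div_assoc]
      exact h1.trans (h2.trans h3)
    obtain ⟨V, hVm2, hVW2, hPV2, hVdef2, hVexp2, hVwit2⟩ :=
      stage_full ν hmeas Y hYm hY0' hYfin' u (γf (k+1)) (γf k) (αf (k+1)) (αf k)
        hu hu1 (hαpos _) (hαmono k) (hαub k) (hγ0 _) (hγmono k) (hγub _)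
        (Y \ Z ((k+1) + n0)) Vp (hWm (k+1)) (hWY (k+1)) (hZsm (k+1)) hVm'
        (by
          refine hVsub.trans (Set.diff_subset_diff_right ?_)
          exact hZdec (by omega))
        (Tf k) (Tf (k+1)) (hTmono k) (hTsym (k+1)).1 hVexp hVwit hsmall'
        (hampPropT (k+1))
    refine ⟨⟨V, hVm2, hVW2, ?_, hVexp2, hVwit2⟩, hPV2⟩
    refine hVdef2.trans (add_le_add_right (add_le_add_left (measure_mono ?_) _) _)
    intro x hx
    simp only [Set.mem_diff, not_and, not_not] at hx
    exact hx.2 hx.1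
  choose stepF hstepSub using hstepex
  set Vs : ∀ k : ℕ, {V : Set X // StP k V} :=
    fun k => Nat.rec ⟨V0, hV0St⟩ (fun k Vk => stepF k Vk) k with hVsdef
  have hVmono : ∀ k, (Vs k).1 ⊆ (Vs (k+1)).1 := fun k => hstepSub k (Vs k)
  have hVmono' : ∀ j k, j ≤ k → (Vs j).1 ⊆ (Vs k).1 := by
    intro j k h
    induction h with
    | refl => exact subset_rfl
    | step h ih => exact ih.trans (hVmono _)
  have hVlow : ∀ k, ENNReal.ofReal (1 - (u/32 + u/32)) * ν Y ≤ ν (Vs k).1 := by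
    intro k
    obtain ⟨-, -, h3, -, -⟩ := (Vs k).2
    refine split_coeff hYfin' (by linarith) (by linarith) ?_
    refine h3.trans (add_le_add_right ?_ _)
    calc ν (Z (k + n0)) + ENNReal.ofReal (αf k) * ν Y
        ≤ ENNReal.ofReal (u/32) * ν Y + ENNReal.ofReal (u/32) * ν Y := by
          refine add_le_add (hN₀ (k + n0) (by omega)) ?_
          exact mul_le_mul_left (ENNReal.ofReal_le_ofReal (hαub k)) _
      _ = ENNReal.ofReal (u/32 + u/32) * ν Y := by
          rw [ENNReal.ofReal_add (by linarith) (by linarith), add_mul]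
  refine ⟨N₀, fun n => if N₀ < n then Tf (n - n0) else {1},
    fun n => if N₀ < n then (Vs (n - n0)).1 else ∅, ?_, ?_, ?_⟩
  · intro m n hm hmn
    simp only [if_pos hm, if_pos (lt_of_lt_of_le hm hmn)]
    exact hVmono' _ _ (by omega)
  · intro n hn
    simp only [if_pos hn]
    obtain ⟨h1, h2, h3, h4, h5⟩ := (Vs (n - n0)).2
    have hidx : (n - n0) + n0 = n := by omega
    rw [hidx] at h2
    refine ⟨h1, h2, ?_, hTsym _, ?_⟩
    · refine lt_of_lt_of_le ?_ (hVlow (n - n0))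
      refine ENNReal.mul_pos ?_ hY0'
      simp only [ne_eq, ENNReal.ofReal_eq_zero, not_le]
      linarith
    · intro A hAm hAs hA0 hAhalf
      refine lt_of_le_of_lt ?_ (h4 A hAm hAs hA0 hAhalf)
      have hco : (1:ENNReal) + ENNReal.ofReal c = ENNReal.ofReal (1 + c) := by
        rw [ENNReal.ofReal_add zero_le_one hc0.le, ENNReal.ofReal_one]
      rw [hco]
      refine mul_le_mul_left (ENNReal.ofReal_le_ofReal ?_) _
      have := hγgec (n - n0)
      linarith
  · set U := ⋃ n, ⋃ (_ : N₀ < n), (if N₀ < n then (Vs (n - n0)).1 else ∅) with hUdef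
    have hsubU : ∀ k, (Vs k).1 ⊆ U := by
      intro k
      have hn : N₀ < k + n0 := by omega
      have hstep : (Vs k).1 ⊆ (if N₀ < k + n0 then (Vs ((k + n0) - n0)).1 else ∅) := by
        rw [if_pos hn]
        have hidx : (k + n0) - n0 = k := by omega
        rw [hidx]
      refine hstep.trans ?_
      exact Set.subset_iUnion₂ (s := fun i (_ : N₀ < i) => if N₀ < i then (Vs (i - n0)).1 else ∅) (k + n0) hn
    have hbound : ∀ k, ν (Y \ U) ≤ ν (Z (k + n0)) + ENNReal.ofReal (αf k) * ν Y := by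
      intro k
      obtain ⟨h1, h2, h3, -, -⟩ := (Vs k).2
      have hVsubY : (Vs k).1 ⊆ Y := h2.trans Set.diff_subset
      have hiq : ν (Vs k).1 + ν (Y \ (Vs k).1) = ν Y := by
        have := measure_add_diff (μ := ν) h1.nullMeasurableSet Y
        rwa [Set.union_eq_self_of_subset_left hVsubY] at this
      have hfin : ν (Vs k).1 ≠ ⊤ := ne_top_of_le_ne_top hYfin' (measure_mono hVsubY)
      have h4 : ν (Vs k).1 + ν (Y \ (Vs k).1)
          ≤ ν (Vs k).1 + (ν (Z (k + n0)) + ENNReal.ofReal (αf k) * ν Y) := by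
        rw [hiq]
        exact h3
      have h5 := (ENNReal.add_le_add_iff_left hfin).mp h4
      exact (measure_mono (Set.diff_subset_diff_right (hsubU k))).trans h5
    have htend : Filter.Tendsto (fun k => ν (Z (k + n0)) + ENNReal.ofReal (αf k) * ν Y)
        Filter.atTop (nhds 0) := by
      have t1 : Filter.Tendsto (fun k : ℕ => ν (Z (k + n0))) Filter.atTop (nhds 0) :=
        hZ0.comp (tendsto_add_atTop_nat n0)
      have t2 : Filter.Tendsto (fun k => ENNReal.ofReal (αf k) * ν Y)
          Filter.atTop (nhds 0) := by
        have ta : Filter.Tendsto αf Filter.atTop (nhds 0) := by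
          have hg : Filter.Tendsto (fun k : ℕ => ((1:ℝ)/2) ^ k) Filter.atTop (nhds 0) :=
            tendsto_pow_atTop_nhds_zero_of_lt_one (by norm_num) (by norm_num)
          have := hg.const_mul (u/32)
          rw [mul_zero] at this
          exact this
        have tb := ENNReal.tendsto_ofReal ta
        rw [ENNReal.ofReal_zero] at tb
        have := ENNReal.Tendsto.mul_const tb (Or.inr hYfin')
        rwa [zero_mul] at this
      have := t1.add t2
      rwa [add_zero] at this
    have hfinal : ν (Y \ U) ≤ 0 := ge_of_tendsto' htend hbound
    exact le_antisymm hfinal zero_le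
end

section
/- Let ρ : Γ ↷ (X,ν) be a measurable action of a countable discrete group on a probability space. Then the following are equivalent: (1) ρ is asymptotically expanding in measure; (2) every measurable subset Y ⊆ X with ν(Y) > 0 admits an exhaustion by domains of expansion; (3) X admits an exhaustion by domains of expansion; (4) X admits an exhaustion by domains of asymptotic expansion. -/
open MeasureTheory Set Filter Pointwise

set_option linter.unusedSectionVars false
set_option linter.unusedVariables false
set_option linter.unnecessarySimpa false
set_option linter.unreachableTactic false
set_option linter.unusedTactic false
set_option maxHeartbeats 1000000


section API
variable {Γ X : Type*} [Group Γ] [MulAction Γ X] [MeasurableSpace X]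

lemma measurableSet_smulset (hmeas : ∀ γ : Γ, Measurable fun x : X => γ • x)
    {A : Set X} (hA : MeasurableSet A) (γ : Γ) : MeasurableSet (γ • A) := by
  have h : γ • A = (fun x : X => γ⁻¹ • x) ⁻¹' A := by
    ext x; simp [Set.mem_smul_set_iff_inv_smul_mem]
  rw [h]; exact (hmeas γ⁻¹) hA

lemma finSMul_meas (hmeas : ∀ γ : Γ, Measurable fun x : X => γ • x)
    {A : Set X} (hA : MeasurableSet A) (S : Finset Γ) : MeasurableSet (finSMul S A) :=
  S.measurableSet_biUnion (fun s _ => measurableSet_smulset hmeas hA s)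

lemma finSMul_mono {A B : Set X} (h : A ⊆ B) (S : Finset Γ) : finSMul S A ⊆ finSMul S B :=
  Set.iUnion₂_mono fun s _ => Set.smul_set_mono h

lemma finSMul_mono_finset {S T : Finset Γ} (h : S ⊆ T) (A : Set X) :
    finSMul S A ⊆ finSMul T A :=
  Set.biUnion_subset_biUnion_left h

lemma subset_finSMul {S : Finset Γ} (h1 : (1:Γ) ∈ S) (A : Set X) : A ⊆ finSMul S A := by
  intro x hx
  exact Set.mem_biUnion h1 (by rw [one_smul]; exact hx)

lemma finSMul_empty (S : Finset Γ) : finSMul S (∅ : Set X) = ∅ := by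
  simp [finSMul]

lemma finSMul_iUnion (S : Finset Γ) (A : ℕ → Set X) :
    finSMul S (⋃ i, A i) = ⋃ i, finSMul S (A i) := by
  ext x; simp only [finSMul, Set.smul_set_iUnion, Set.mem_iUnion]
  tauto

lemma finSMul_mul [DecidableEq Γ] (S T : Finset Γ) (A : Set X) :
    finSMul (S * T) A = finSMul S (finSMul T A) := by
  ext x
  simp only [finSMul, Set.mem_iUnion, Finset.mem_mul, Set.smul_set_iUnion]
  constructor
  · rintro ⟨u, ⟨s, hs, t, ht, rfl⟩, hx⟩
    exact ⟨s, hs, ⟨t, ht, by rwa [← mul_smul] ⟩⟩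
  · rintro ⟨s, hs, t, ht, hx⟩
    exact ⟨s*t, ⟨s, hs, t, ht, rfl⟩, by rwa [mul_smul]⟩
end API


section API
variable {Γ X : Type*} [Group Γ] [MulAction Γ X] [MeasurableSpace X]

lemma finSMul_one [DecidableEq Γ] (A : Set X) : finSMul (1 : Finset Γ) A = A := by
  simp [finSMul, Finset.mem_one]

lemma one_mem_pow [DecidableEq Γ] {S : Finset Γ} (h1 : (1:Γ) ∈ S) (n : ℕ) :
    (1:Γ) ∈ S ^ n := by
  induction n with
  | zero => simp
  | succ k ih => rw [pow_succ]; exact (by simpa using Finset.mul_mem_mul ih h1)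

lemma pow_symm [DecidableEq Γ] {S : Finset Γ} (hS : SymmFin S) (n : ℕ) :
    SymmFin (S ^ n) := by
  induction n with
  | zero => simpa [SymmFin] using fun s hs => by simp_all
  | succ k ih =>
    refine ⟨one_mem_pow hS.1 _, ?_⟩
    intro s hs
    rw [pow_succ] at hs
    obtain ⟨a, ha, b, hb, rfl⟩ := Finset.mem_mul.mp hs
    rw [mul_inv_rev, pow_succ']
    exact Finset.mul_mem_mul (hS.2 b hb) (ih.2 a ha)

-- symmetrization
lemma symmFin_union_inv [DecidableEq Γ] {T : Finset Γ} (h1 : (1:Γ) ∈ T) :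
    SymmFin (T ∪ T⁻¹) := by
  refine ⟨Finset.mem_union_left _ h1, ?_⟩
  intro s hs
  rcases Finset.mem_union.mp hs with h | h
  · exact Finset.mem_union_right _ (by simpa using h)
  · exact Finset.mem_union_left _ (by simpa using h)

lemma symmFin_union [DecidableEq Γ] {S T : Finset Γ} (hS : SymmFin S) (hT : SymmFin T) :
    SymmFin (S ∪ T) := by
  classical
  refine ⟨Finset.mem_union_left _ hS.1, fun s hs => ?_⟩
  rcases Finset.mem_union.mp hs with h | h
  · exact Finset.mem_union_left _ (hS.2 _ h)
  · exact Finset.mem_union_right _ (hT.2 _ h)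

-- disjointness swap
lemma disjoint_swap {S : Finset Γ} (hS : SymmFin S) {A B : Set X}
    (h : finSMul S A ∩ B = ∅) : A ∩ finSMul S B = ∅ := by
  by_contra hne
  obtain ⟨x, hxA, hxB⟩ := Set.nonempty_iff_ne_empty.mpr hne
  obtain ⟨s, hs, y, hy, rfl⟩ : ∃ s ∈ S, ∃ y ∈ B, s • y = x := by
    simpa [finSMul, Set.mem_smul_set] using hxB
  have : y ∈ finSMul S A ∩ B := by
    constructor
    · refine Set.mem_biUnion (hS.2 s hs) ?_
      exact ⟨s • y, hxA, by simp [← mul_smul]⟩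
    · exact hy
  rw [h] at this; exact this
end API

section MR
variable {X : Type*} [MeasurableSpace X] (ν : Measure X) [IsProbabilityMeasure ν]

lemma mr_ne_top (A : Set X) : ν A ≠ ⊤ := measure_ne_top ν A

lemma mr_mono {A B : Set X} (h : A ⊆ B) : (ν A).toReal ≤ (ν B).toReal :=
  ENNReal.toReal_mono (measure_ne_top ν B) (measure_mono h)

lemma mr_nonneg (A : Set X) : 0 ≤ (ν A).toReal := ENNReal.toReal_nonneg

lemma mr_le_one (A : Set X) : (ν A).toReal ≤ 1 := by
  simpa using mr_mono ν (Set.subset_univ A)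

lemma mr_union_le (A B : Set X) : (ν (A ∪ B)).toReal ≤ (ν A).toReal + (ν B).toReal := by
  rw [← ENNReal.toReal_add (measure_ne_top ν A) (measure_ne_top ν B)]
  exact ENNReal.toReal_mono (by finiteness) (measure_union_le A B)

lemma mr_union_disj {A B : Set X} (hd : Disjoint A B) (hB : MeasurableSet B) :
    (ν (A ∪ B)).toReal = (ν A).toReal + (ν B).toReal := by
  rw [measure_union hd hB, ENNReal.toReal_add (measure_ne_top ν A) (measure_ne_top ν B)]

lemma mr_diff {A B : Set X} (h : B ⊆ A) (hB : MeasurableSet B) :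
    (ν (A \ B)).toReal = (ν A).toReal - (ν B).toReal := by
  rw [measure_diff h hB.nullMeasurableSet (measure_ne_top ν B),
    ENNReal.toReal_sub_of_le (measure_mono h) (measure_ne_top ν A)]

lemma mr_compl {A : Set X} (hA : MeasurableSet A) :
    (ν Aᶜ).toReal = 1 - (ν A).toReal := by
  rw [measure_compl hA (measure_ne_top ν A)]
  simp [ENNReal.toReal_sub_of_le prob_le_one (by simp)]

lemma mr_pos {A : Set X} (h : 0 < ν A) : 0 < (ν A).toReal :=
  ENNReal.toReal_pos h.ne' (measure_ne_top ν A)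

lemma mr_pos_iff {A : Set X} : 0 < (ν A).toReal ↔ 0 < ν A := by
  rw [ENNReal.toReal_pos_iff]
  exact ⟨fun h => h.1, fun h => ⟨h, (measure_ne_top ν A).lt_top⟩⟩

lemma mr_half (Y : Set X) : (ν Y / 2).toReal = (ν Y).toReal / 2 := by
  rw [ENNReal.toReal_div]; norm_num

lemma mr_le_iff {A B : Set X} : (ν A).toReal ≤ (ν B).toReal ↔ ν A ≤ ν B :=
  ENNReal.toReal_le_toReal (measure_ne_top ν A) (measure_ne_top ν B)

lemma ofReal_le_measure_iff {α : ℝ} {A : Set X} :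
    ENNReal.ofReal α ≤ ν A ↔ α ≤ (ν A).toReal :=
  ENNReal.ofReal_le_iff_le_toReal (measure_ne_top ν A)

lemma expand_goal_iff {c : ℝ} (hc : 0 ≤ c) {A G : Set X} :
    (1 + ENNReal.ofReal c) * ν A < ν G ↔ (1 + c) * (ν A).toReal < (ν G).toReal := by
  rw [← ENNReal.toReal_lt_toReal (by finiteness) (measure_ne_top ν G),
    ENNReal.toReal_mul, ENNReal.toReal_add (by simp) ENNReal.ofReal_ne_top,
    ENNReal.toReal_ofReal hc]
  norm_num
end MR

section Pow
variable {Γ X : Type*} [Group Γ] [MulAction Γ X] [MeasurableSpace X]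

lemma finSMul_pow [DecidableEq Γ] (U : Finset Γ) (A : Set X) (k : ℕ) :
    finSMul (U ^ k) A = (fun B => finSMul U B)^[k] A := by
  induction k generalizing A with
  | zero => simp [finSMul_one]
  | succ n ih =>
    rw [pow_succ, finSMul_mul, Function.iterate_succ_apply, ← ih]
end Pow

/-- Real-valued form of global asymptotic expansion. -/
def GlobExp (Γ : Type*) {X : Type*} [Group Γ] [MulAction Γ X] [MeasurableSpace X]
    (ν : Measure X) : Prop :=
  ∀ α : ℝ, 0 < α → α ≤ 1/2 → ∃ c : ℝ, 0 < c ∧ ∃ S : Finset Γ, SymmFin S ∧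
    ∀ A : Set X, MeasurableSet A → α ≤ (ν A).toReal → (ν A).toReal ≤ 1/2 →
      (1 + c) * (ν A).toReal < (ν (finSMul S A)).toReal

section Main
variable {Γ X : Type*} [Group Γ] [MulAction Γ X] [MeasurableSpace X]
  (ν : Measure X) [IsProbabilityMeasure ν]

lemma globExp_of_one (h : AsymExpDomain Γ ν Set.univ) : GlobExp Γ ν := by
  intro α hα hα2
  obtain ⟨c, hc, S, hS, hexp⟩ := h α hα hα2
  refine ⟨c, hc, S, hS, fun A hA h1 h2 => ?_⟩
  have := hexp A hA (Set.subset_univ A) ?_ ?_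
  · rw [Set.inter_univ] at this
    exact (expand_goal_iff ν hc.le).mp this
  · rw [measure_univ, mul_one]
    exact (ofReal_le_measure_iff ν).mpr h1
  · rw [measure_univ]
    have : (ν A).toReal ≤ ((1:ENNReal)/2).toReal := by simpa using h2
    exact ((ENNReal.toReal_le_toReal (measure_ne_top ν A) (by simp)).mp this)

lemma iter_meas (hmeas : ∀ γ : Γ, Measurable fun x : X => γ • x) (S : Finset Γ)
    {A : Set X} (hA : MeasurableSet A) (k : ℕ) :
    MeasurableSet ((fun B => finSMul S B)^[k] A) := by
  induction k with
  | zero => simpa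
  | succ n ih => rw [Function.iterate_succ_apply']; exact finSMul_meas hmeas ih S

lemma iter_subset {S : Finset Γ} (h1 : (1:Γ) ∈ S) (A : Set X) (k : ℕ) :
    (fun B => finSMul S B)^[k] A ⊆ (fun B => finSMul S B)^[k+1] A := by
  rw [Function.iterate_succ_apply']
  exact subset_finSMul h1 _

lemma subset_iter {S : Finset Γ} (h1 : (1:Γ) ∈ S) (A : Set X) (k : ℕ) :
    A ⊆ (fun B => finSMul S B)^[k] A := by
  induction k with
  | zero => simp
  | succ n ih => exact ih.trans (iter_subset h1 A n)

/-- Lemma (M): under global asymptotic expansion, any measurable set of measure at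
least `α` has a finite translate of measure more than `1 - β`. -/
lemma lemma_M (hmeas : ∀ γ : Γ, Measurable fun x : X => γ • x) (hg : GlobExp Γ ν)
    (α β : ℝ) (hα : 0 < α) (hβ : 0 < β) :
    ∃ T : Finset Γ, SymmFin T ∧ ∀ A : Set X, MeasurableSet A →
      α ≤ (ν A).toReal → 1 - β < (ν (finSMul T A)).toReal := by
  classical
  set a := min α (1/2) with ha_def
  set b := min β (1/2) with hb_def
  have ha : 0 < a := lt_min hα (by norm_num)
  have hb : 0 < b := lt_min hβ (by norm_num)
  obtain ⟨c, hc, S, hS, hexp⟩ := hg a ha (min_le_right _ _)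
  obtain ⟨c', hc', S', hS', hexp'⟩ := hg b hb (min_le_right _ _)
  set F : Set X → Set X := fun B => finSMul S B with hF
  set G : Set X → Set X := fun B => finSMul S' B with hG
  -- Step 1: reach measure > 1/2
  have claim1 : ∀ k, ∀ A : Set X, MeasurableSet A → a ≤ (ν A).toReal →
      1/2 < (ν (F^[k] A)).toReal ∨ (1+c)^k * a ≤ (ν (F^[k] A)).toReal := by
    intro k
    induction k with
    | zero => intro A hA haA; right; simpa using haA
    | succ n ih =>
      intro A hA haA
      rcases ih A hA haA with h | h
      · left; exact lt_of_lt_of_le h (mr_mono ν (iter_subset hS.1 A n))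
      · by_cases hhalf : 1/2 < (ν (F^[n] A)).toReal
        · left; exact lt_of_lt_of_le hhalf (mr_mono ν (iter_subset hS.1 A n))
        · push_neg at hhalf
          have hma : a ≤ (ν (F^[n] A)).toReal :=
            le_trans (le_mul_of_one_le_left ha.le (one_le_pow₀ (by linarith))) h
          have hstep := hexp _ (iter_meas hmeas S hA n) hma hhalf
          right
          rw [Function.iterate_succ_apply']
          calc (1+c)^(n+1) * a = (1+c) * ((1+c)^n * a) := by ring
          _ ≤ (1+c) * (ν (F^[n] A)).toReal :=
              mul_le_mul_of_nonneg_left h (by linarith)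
          _ ≤ (ν (F (F^[n] A))).toReal := hstep.le
  obtain ⟨N, hN⟩ : ∃ N : ℕ, 1/2 < (1+c)^N * a := by
    obtain ⟨N, hN⟩ := pow_unbounded_of_one_lt ((1/2)/a) (by linarith : (1:ℝ) < 1 + c)
    exact ⟨N, by rwa [div_lt_iff₀ ha] at hN⟩
  have step1 : ∀ A : Set X, MeasurableSet A → a ≤ (ν A).toReal →
      1/2 < (ν (F^[N] A)).toReal := by
    intro A hA haA
    rcases claim1 N A hA haA with h | h
    · exact h
    · exact lt_of_lt_of_le hN h
  -- Step 2: from measure > 1/2 to measure > 1 - b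
  have nbhd : ∀ B : Set X, ∀ k, finSMul S' ((G^[k+1] B)ᶜ) ⊆ (G^[k] B)ᶜ := by
    intro B k x hx
    obtain ⟨s, hs, d, hd, rfl⟩ : ∃ s ∈ S', ∃ d ∈ (G^[k+1] B)ᶜ, s • d = x := by
      simpa [finSMul, Set.mem_smul_set] using hx
    intro hxin
    apply hd
    rw [Function.iterate_succ_apply']
    exact Set.mem_biUnion (hS'.2 s hs) ⟨s • d, hxin, by simp [← mul_smul]⟩
  have claim2 : ∀ B : Set X, MeasurableSet B → 1/2 < (ν B).toReal → ∀ k,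
      (ν ((G^[k] B)ᶜ)).toReal < b ∨ (ν ((G^[k] B)ᶜ)).toReal ≤ (1/2) / (1+c')^k := by
    intro B hB hBhalf k
    induction k with
    | zero =>
      right
      simp only [Function.iterate_zero, id_eq, pow_zero, div_one]
      rw [mr_compl ν hB]; linarith
    | succ n ih =>
      have hsub : (G^[n+1] B)ᶜ ⊆ (G^[n] B)ᶜ :=
        Set.compl_subset_compl.mpr (iter_subset hS'.1 B n)
      rcases ih with h | h
      · left; exact lt_of_le_of_lt (mr_mono ν hsub) h
      · by_cases hsmall : (ν ((G^[n+1] B)ᶜ)).toReal < b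
        · left; exact hsmall
        · push_neg at hsmall
          right
          have hmeasn : MeasurableSet ((G^[n+1] B)ᶜ) :=
            (iter_meas hmeas S' hB (n+1)).compl
          have hle : (ν ((G^[n+1] B)ᶜ)).toReal ≤ 1/2 := by
            have h0 : (G^[n+1] B)ᶜ ⊆ Bᶜ :=
              Set.compl_subset_compl.mpr (subset_iter hS'.1 B (n+1))
            have := mr_mono ν h0
            rw [mr_compl ν hB] at this
            linarith
          have hexpand := hexp' _ hmeasn hsmall hle
          have hcontain : (ν (finSMul S' ((G^[n+1] B)ᶜ))).toReal ≤ (ν ((G^[n] B)ᶜ)).toReal :=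
            mr_mono ν (nbhd B n)
          have hpow : (0:ℝ) < (1+c')^n := pow_pos (by linarith) n
          have hkey : (1 + c') * (ν ((G^[n+1] B)ᶜ)).toReal ≤ (1/2)/(1+c')^n := by
            linarith
          rw [pow_succ, ← div_div, le_div_iff₀ (by linarith : (0:ℝ) < 1 + c')]
          linarith [hkey]
  obtain ⟨K, hK⟩ : ∃ K : ℕ, (1/2) / (1+c')^K < b := by
    obtain ⟨K, hK⟩ := pow_unbounded_of_one_lt ((1/2)/b) (by linarith : (1:ℝ) < 1 + c')
    refine ⟨K, ?_⟩
    rw [div_lt_iff₀ (pow_pos (by linarith) K)]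
    rw [div_lt_iff₀ hb] at hK
    nlinarith [pow_pos (by linarith : (0:ℝ) < 1 + c') K]
  have step2 : ∀ B : Set X, MeasurableSet B → 1/2 < (ν B).toReal →
      1 - b < (ν (G^[K] B)).toReal := by
    intro B hB hBhalf
    have hcompl : (ν ((G^[K] B)ᶜ)).toReal < b := by
      rcases claim2 B hB hBhalf K with h | h
      · exact h
      · exact lt_of_le_of_lt h hK
    rw [mr_compl ν (iter_meas hmeas S' hB K)] at hcompl
    linarith
  -- combine
  set T0 : Finset Γ := S'^K * S^N with hT0
  have hT0mem : (1:Γ) ∈ T0 := by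
    have := Finset.mul_mem_mul (one_mem_pow hS'.1 K) (one_mem_pow hS.1 N)
    simpa using this
  refine ⟨T0 ∪ T0⁻¹, symmFin_union_inv hT0mem, fun A hA hαA => ?_⟩
  have heq : finSMul T0 A = G^[K] (F^[N] A) := by
    rw [hT0, finSMul_mul, finSMul_pow, finSMul_pow]
  have h1 : 1 - b < (ν (finSMul T0 A)).toReal := by
    rw [heq]
    exact step2 _ (iter_meas hmeas S hA N) (step1 A hA (le_trans (min_le_left _ _) hαA))
  have hmono : (ν (finSMul T0 A)).toReal ≤ (ν (finSMul (T0 ∪ T0⁻¹) A)).toReal :=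
    mr_mono ν (finSMul_mono_finset Finset.subset_union_left A)
  have : 1 - β ≤ 1 - b := by
    have : b ≤ β := min_le_left _ _
    linarith
  linarith
end Main

section Helpers
variable {Γ X : Type*} [Group Γ] [MulAction Γ X] [MeasurableSpace X]
  (ν : Measure X) [IsProbabilityMeasure ν]

lemma finSMul_biUnion (S : Finset Γ) (F : Finset ℕ) (A : ℕ → Set X) :
    finSMul S (⋃ j ∈ F, A j) = ⋃ j ∈ F, finSMul S (A j) := by
  ext x
  simp only [finSMul, Set.smul_set_iUnion, Set.mem_iUnion]
  tauto

lemma mr_biUnion_le (F : Finset ℕ) (E : ℕ → Set X) :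
    (ν (⋃ j ∈ F, E j)).toReal ≤ ∑ j ∈ F, (ν (E j)).toReal := by
  have h1 : ν (⋃ j ∈ F, E j) ≤ ∑ j ∈ F, ν (E j) := measure_biUnion_finset_le F E
  calc (ν (⋃ j ∈ F, E j)).toReal ≤ (∑ j ∈ F, ν (E j)).toReal :=
        ENNReal.toReal_mono (ENNReal.sum_ne_top.mpr (fun j hj => measure_ne_top ν (E j))) h1
  _ = ∑ j ∈ F, (ν (E j)).toReal := ENNReal.toReal_sum (fun j hj => measure_ne_top ν (E j))

lemma mr_biUnion_eq (F : Finset ℕ) (E : ℕ → Set X)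
    (hd : ∀ i ∈ F, ∀ j ∈ F, i ≠ j → Disjoint (E i) (E j))
    (hm : ∀ j ∈ F, MeasurableSet (E j)) :
    (ν (⋃ j ∈ F, E j)).toReal = ∑ j ∈ F, (ν (E j)).toReal := by
  have h1 : ν (⋃ j ∈ F, E j) = ∑ j ∈ F, ν (E j) := by
    apply measure_biUnion_finset _ hm
    intro i hi j hj hij
    exact hd i hi j hj hij
  rw [h1]
  exact ENNReal.toReal_sum (fun j hj => measure_ne_top ν (E j))
end Helpers

section KL
variable {Γ X : Type*} [Group Γ] [MulAction Γ X] [MeasurableSpace X]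
  (ν : Measure X) [IsProbabilityMeasure ν]

lemma near_sup {P : Set X → Prop} (h : ∃ A, P A) (hpos : ∀ A, P A → 0 < (ν A).toReal) :
    ∃ A, P A ∧ ∀ A', P A' → (ν A').toReal ≤ 2 * (ν A).toReal := by
  classical
  set Q : Set ℝ := {t | ∃ A, P A ∧ t = (ν A).toReal} with hQ
  obtain ⟨A₀, hA₀⟩ := h
  have hQne : Q.Nonempty := ⟨_, A₀, hA₀, rfl⟩
  have hQbdd : BddAbove Q := ⟨1, by rintro t ⟨A, hA, rfl⟩; exact mr_le_one ν A⟩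
  have hspos : 0 < sSup Q :=
    lt_of_lt_of_le (hpos _ hA₀) (le_csSup hQbdd ⟨_, hA₀, rfl⟩)
  obtain ⟨t, ht1, ht2⟩ := exists_lt_of_lt_csSup hQne (by linarith : sSup Q / 2 < sSup Q)
  obtain ⟨A, hA, rfl⟩ := ht1
  refine ⟨A, hA, fun A' hA' => ?_⟩
  have h' : (ν A').toReal ≤ sSup Q := le_csSup hQbdd ⟨A', hA', rfl⟩
  linarith
end KL

section KL2
variable {Γ X : Type*} [Group Γ] [MulAction Γ X] [MeasurableSpace X]
  (ν : Measure X) [IsProbabilityMeasure ν]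

lemma key_lemma (hmeas : ∀ γ : Γ, Measurable fun x : X => γ • x) (hg : GlobExp Γ ν)
    {Y : Set X} (hY : MeasurableSet Y) (hYpos : 0 < (ν Y).toReal)
    {ε : ℝ} (hε : 0 < ε) (hε2 : ε ≤ (ν Y).toReal / 4) :
    ∃ Z : Set X, MeasurableSet Z ∧ Z ⊆ Y ∧ (ν (Y \ Z)).toReal ≤ ε ∧ 0 < ν Z ∧
      ExpDomain Γ ν Z := by
  classical
  set m := (ν Y).toReal with hm
  obtain ⟨T, hT, hTM⟩ := lemma_M ν hmeas hg (ε/2) (m/8) (by linarith) (by linarith)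
  set bad : Set X → Set X → Prop := fun Z A => MeasurableSet A ∧ A ⊆ Z ∧
    0 < (ν A).toReal ∧ (ν A).toReal < ε/2 ∧
    (ν (finSMul T A ∩ Z)).toReal ≤ (3/2) * (ν A).toReal with hbad
  have hstep : ∀ Z : Set X, ∃ R : Set X, MeasurableSet R ∧ R ⊆ Z ∧
      (((∀ A, ¬ bad Z A) ∧ R = ∅) ∨
        (bad Z R ∧ ∀ A, bad Z A → (ν A).toReal ≤ 2 * (ν R).toReal)) := by
    intro Z
    by_cases h : ∃ A, bad Z A
    · obtain ⟨R, hR, hRmax⟩ := near_sup ν h (fun A hA => hA.2.2.1)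
      exact ⟨R, hR.1, hR.2.1, Or.inr ⟨hR, hRmax⟩⟩
    · push_neg at h
      exact ⟨∅, MeasurableSet.empty, Set.empty_subset _, Or.inl ⟨h, rfl⟩⟩
  choose step hstepm hstepsub hstepspec using hstep
  set Zs : ℕ → Set X := fun n => Nat.rec Y (fun _ Zn => Zn \ step Zn) n with hZs
  have hZsucc : ∀ n, Zs (n+1) = Zs n \ step (Zs n) := fun n => rfl
  set R : ℕ → Set X := fun n => step (Zs n) with hRdef
  have hRmeas : ∀ n, MeasurableSet (R n) := fun n => hstepm _
  have hRsub : ∀ n, R n ⊆ Zs n := fun n => hstepsub _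
  have hZmeas : ∀ n, MeasurableSet (Zs n) := by
    intro n
    induction n with
    | zero => exact hY
    | succ n ih => rw [hZsucc]; exact ih.diff (hstepm _)
  have hZanti : Antitone Zs := antitone_nat_of_succ_le (fun n => by
    rw [hZsucc]; exact Set.diff_subset)
  have hZsubY : ∀ n, Zs n ⊆ Y := fun n => hZanti (Nat.zero_le n)
  have hZdiff : ∀ n, Disjoint (Zs (n+1)) (R n) := fun n => by
    rw [hZsucc]; exact Set.disjoint_sdiff_left
  have hRdisj : ∀ i j, i < j → Disjoint (R i) (R j) := by
    intro i j hij
    have h1 : R j ⊆ Zs i \ R i := by rw [← hZsucc]; exact (hRsub j).trans (hZanti hij)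
    exact disjoint_sdiff_self_right.mono_right h1
  have hU : ∀ n, Zs n = Y \ ⋃ j ∈ Finset.range n, R j := by
    intro n
    induction n with
    | zero => show Y = _; simp
    | succ n ih =>
      have hRn : R n = step (Y \ ⋃ j ∈ Finset.range n, R j) := by
        rw [hRdef]; simp only; rw [ih]
      rw [hZsucc, ih, Set.diff_diff]
      congr 1
      rw [Finset.range_add_one, Finset.set_biUnion_insert, hRn, Set.union_comm]
  -- (f5): total removed measure stays below ε/2
  have hUb : ∀ n, (ν (⋃ j ∈ Finset.range n, R j)).toReal < ε/2 := by
    by_contra hcon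
    push_neg at hcon
    obtain ⟨n₀, hn₀⟩ := hcon
    have hP : ∃ n, ε/2 ≤ (ν (⋃ j ∈ Finset.range n, R j)).toReal := ⟨n₀, hn₀⟩
    have hI1 := Nat.find_spec hP
    have hIpos : Nat.find hP ≠ 0 := by
      intro h0
      rw [h0] at hI1
      simp only [Finset.range_zero] at hI1
      simp at hI1
      linarith
    obtain ⟨I, hIeq⟩ := Nat.exists_eq_succ_of_ne_zero hIpos
    have hUI : (ν (⋃ j ∈ Finset.range I, R j)).toReal < ε/2 := by
      have := Nat.find_min hP (m := I) (by omega)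
      linarith [not_le.mp this]
    have hDI1 : ε/2 ≤ (ν (⋃ j ∈ Finset.range (I+1), R j)).toReal := by
      have h' := hI1
      rw [hIeq] at h'
      exact h'
    set D := ⋃ j ∈ Finset.range (I+1), R j with hD
    have hDmeas : MeasurableSet D :=
      Finset.measurableSet_biUnion _ (fun j _ => hRmeas j)
    have hDsplit : D = (⋃ j ∈ Finset.range I, R j) ∪ R I := by
      rw [hD, Finset.range_add_one, Finset.set_biUnion_insert, Set.union_comm]
    rcases hstepspec (Zs I) with ⟨hnone, hRI0⟩ | ⟨hbadRI, hmaxRI⟩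
    · have hRIempty : R I = ∅ := hRI0
      rw [hDsplit, hRIempty, Set.union_empty] at hDI1
      linarith
    · have hRIsmall : (ν (R I)).toReal < ε/2 := hbadRI.2.2.2.1
      have hDub : (ν D).toReal < ε := by
        rw [hDsplit]
        have := mr_union_le ν (⋃ j ∈ Finset.range I, R j) (R I)
        linarith
      -- per-term boundary bound
      have hterm : ∀ j ∈ Finset.range (I+1),
          (ν (finSMul T (R j) ∩ Zs (I+1))).toReal ≤ (1/2) * (ν (R j)).toReal := by
        intro j hj
        rcases hstepspec (Zs j) with ⟨_, hRj0⟩ | ⟨hbadj, _⟩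
        · have hRjempty : R j = ∅ := hRj0
          rw [hRjempty, finSMul_empty]
          simp
        · have h1 : R j ⊆ finSMul T (R j) ∩ Zs j :=
            Set.subset_inter (subset_finSMul hT.1 _) (hRsub j)
          have h2 : finSMul T (R j) ∩ Zs (I+1) ⊆ (finSMul T (R j) ∩ Zs j) \ R j := by
            intro x hx
            have hxj1 : x ∈ Zs (j+1) := hZanti (by
              exact Nat.succ_le_succ (Nat.lt_succ_iff.mp (Finset.mem_range.mp hj))) hx.2
            rw [hZsucc] at hxj1
            exact ⟨⟨hx.1, hxj1.1⟩, hxj1.2⟩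
          have h3 := mr_mono ν h2
          rw [mr_diff ν h1 (hRmeas j)] at h3
          have h4 : (ν (finSMul T (R j) ∩ Zs j)).toReal ≤ (3/2)*(ν (R j)).toReal :=
            hbadj.2.2.2.2
          linarith
      -- sum the boundary bounds
      have hsplitsub : finSMul T D ∩ Zs (I+1) ⊆
          ⋃ j ∈ Finset.range (I+1), (finSMul T (R j) ∩ Zs (I+1)) := by
        intro x hx
        have hx1 := hx.1
        rw [hD, finSMul_biUnion] at hx1
        obtain ⟨j, hj, hxj⟩ := Set.mem_iUnion₂.mp hx1
        exact Set.mem_iUnion₂.mpr ⟨j, hj, hxj, hx.2⟩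
      have hDsum : (ν D).toReal = ∑ j ∈ Finset.range (I+1), (ν (R j)).toReal := by
        rw [hD]
        exact mr_biUnion_eq ν _ R (fun i _ j _ hij => by
          rcases Nat.lt_or_ge i j with h | h
          · exact hRdisj i j h
          · exact (hRdisj j i (by omega)).symm) (fun j _ => hRmeas j)
      have hbd1 : (ν (finSMul T D ∩ Zs (I+1))).toReal ≤ (1/2) * (ν D).toReal := by
        calc (ν (finSMul T D ∩ Zs (I+1))).toReal
            ≤ (ν (⋃ j ∈ Finset.range (I+1), (finSMul T (R j) ∩ Zs (I+1)))).toReal :=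
              mr_mono ν hsplitsub
        _ ≤ ∑ j ∈ Finset.range (I+1), (ν (finSMul T (R j) ∩ Zs (I+1))).toReal :=
              mr_biUnion_le ν _ _
        _ ≤ ∑ j ∈ Finset.range (I+1), (1/2) * (ν (R j)).toReal :=
              Finset.sum_le_sum hterm
        _ = (1/2) * (ν D).toReal := by rw [hDsum, Finset.mul_sum]
      -- lemma M lower bound
      have hDM : 1 - m/8 < (ν (finSMul T D)).toReal := hTM D hDmeas hDI1
      have hTDY : m - m/8 < (ν (finSMul T D ∩ Y)).toReal := by
        have e1 : finSMul T D ⊆ (finSMul T D ∩ Y) ∪ Yᶜ := by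
          intro x hx
          by_cases hxY : x ∈ Y
          · exact Or.inl ⟨hx, hxY⟩
          · exact Or.inr hxY
        have e2 := (mr_mono ν e1).trans (mr_union_le ν _ _)
        rw [mr_compl ν hY] at e2
        rw [← hm] at e2
        linarith
      -- upper bound
      have hcover : finSMul T D ∩ Y ⊆ (finSMul T D ∩ Zs (I+1)) ∪ D := by
        intro x hx
        by_cases hxD : x ∈ D
        · exact Or.inr hxD
        · refine Or.inl ⟨hx.1, ?_⟩
          rw [hU (I+1)]
          exact ⟨hx.2, by rwa [← hD]⟩
      have hub := (mr_mono ν hcover).trans (mr_union_le ν _ _)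
      linarith
  -- the countable union of removed sets
  set Uinf := ⋃ j, R j with hUinfdef
  have hUinfmeas : MeasurableSet Uinf := MeasurableSet.iUnion hRmeas
  have hUnion_eq : ⋃ n, ⋃ j ∈ Finset.range n, R j = Uinf := by
    ext x
    simp only [Set.mem_iUnion, hUinfdef, Finset.mem_range]
    constructor
    · rintro ⟨n, j, hj, hx⟩; exact ⟨j, hx⟩
    · rintro ⟨j, hx⟩; exact ⟨j+1, j, Nat.lt_succ_self j, hx⟩
  have hmonoU : Monotone (fun n => ⋃ j ∈ Finset.range n, R j) := fun a b hab =>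
    Set.biUnion_subset_biUnion_left (Finset.range_subset_range.mpr hab)
  have htend := tendsto_measure_iUnion_atTop (μ := ν) hmonoU
  rw [hUnion_eq] at htend
  have hUinfle : ν Uinf ≤ ENNReal.ofReal (ε/2) :=
    le_of_tendsto' htend (fun n =>
      (ENNReal.le_ofReal_iff_toReal_le (measure_ne_top ν _) (by linarith)).mpr
        (le_of_lt (hUb n)))
  have hUinfr : (ν Uinf).toReal ≤ ε/2 := by
    have h2 := ENNReal.toReal_mono ENNReal.ofReal_ne_top hUinfle
    rwa [ENNReal.toReal_ofReal (by linarith)] at h2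
  set Zinf := Y \ Uinf with hZinfdef
  have hZinfmeas : MeasurableSet Zinf := hY.diff hUinfmeas
  have hZinfsub : ∀ n, Zinf ⊆ Zs n := fun n => by
    rw [hU n]
    exact Set.diff_subset_diff_right (fun x hx => by
      obtain ⟨j, hj, hxj⟩ := Set.mem_iUnion₂.mp hx
      exact Set.mem_iUnion.mpr ⟨j, hxj⟩)
  -- tail estimates
  have hpair : Pairwise (Function.onFun Disjoint R) := by
    intro i j hij
    rcases Nat.lt_or_ge i j with h | h
    · exact hRdisj i j h
    · exact (hRdisj j i (by omega)).symm
  have htsum : ν Uinf = ∑' j, ν (R j) := measure_iUnion hpair hRmeas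
  have hfin : ∑' j, ν (R j) ≠ ⊤ := by rw [← htsum]; exact measure_ne_top ν _
  have htail := ENNReal.tendsto_sum_nat_add (fun j => ν (R j)) hfin
  have htailb : ∀ δ : ℝ, 0 < δ → ∃ n, (ν (Zs n \ Zinf)).toReal < δ := by
    intro δ hδ
    have hev : ∀ᶠ n in atTop, ∑' k, ν (R (k + n)) < ENNReal.ofReal δ :=
      htail.eventually_lt_const (ENNReal.ofReal_pos.mpr hδ)
    obtain ⟨n, hn⟩ := hev.exists
    refine ⟨n, ?_⟩
    have hsubtail : Zs n \ Zinf ⊆ ⋃ k, R (k + n) := by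
      intro x hx
      have hxY : x ∈ Y := hZsubY n hx.1
      have hxUinf : x ∈ Uinf := by
        by_contra hxU; exact hx.2 ⟨hxY, hxU⟩
      obtain ⟨j, hj⟩ := Set.mem_iUnion.mp hxUinf
      have hxnotUn : x ∉ ⋃ i ∈ Finset.range n, R i := by
        have h' := hx.1; rw [hU n] at h'; exact h'.2
      have hjge : n ≤ j := by
        by_contra h'; push_neg at h'
        exact hxnotUn (Set.mem_biUnion (Finset.mem_range.mpr h') hj)
      exact Set.mem_iUnion.mpr ⟨j - n, by rwa [Nat.sub_add_cancel hjge]⟩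
    have h1 : ν (Zs n \ Zinf) ≤ ∑' k, ν (R (k + n)) :=
      (measure_mono hsubtail).trans (measure_iUnion_le _)
    have h2 : (ν (Zs n \ Zinf)).toReal ≤ (∑' k, ν (R (k+n))).toReal :=
      ENNReal.toReal_mono hn.ne_top h1
    have h3 : (∑' k, ν (R (k+n))).toReal < δ := ENNReal.toReal_lt_of_lt_ofReal hn
    linarith
  -- no small almost invariant sets in Zinf
  have hsmall : ∀ B, MeasurableSet B → B ⊆ Zinf → 0 < (ν B).toReal →
      (ν B).toReal < ε/2 →
      (1 + 1/4) * (ν B).toReal < (ν (finSMul T B ∩ Zinf)).toReal := by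
    intro B hB hBsub hBpos hBsmall
    by_contra hcontra
    push_neg at hcontra
    obtain ⟨n, hn⟩ := htailb ((ν B).toReal/4) (by linarith)
    have hBbad : bad (Zs n) B := by
      refine ⟨hB, hBsub.trans (hZinfsub n), hBpos, hBsmall, ?_⟩
      have hsubn : finSMul T B ∩ Zs n ⊆ (finSMul T B ∩ Zinf) ∪ (Zs n \ Zinf) := by
        intro x hx
        by_cases hxZ : x ∈ Zinf
        · exact Or.inl ⟨hx.1, hxZ⟩
        · exact Or.inr ⟨hx.2, hxZ⟩
      have h2 := (mr_mono ν hsubn).trans (mr_union_le ν _ _)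
      linarith
    rcases hstepspec (Zs n) with ⟨hnone, _⟩ | ⟨hbadn, hmaxn⟩
    · exact hnone B hBbad
    · have h1 : (ν B).toReal ≤ 2 * (ν (R n)).toReal := hmaxn B hBbad
      have h2 : R n ⊆ Zs n \ Zinf := by
        intro x hx
        refine ⟨hRsub n hx, fun hxZ => ?_⟩
        have h3 : x ∈ Zs (n+1) := (hZinfsub (n+1)) hxZ
        rw [hZsucc] at h3
        exact h3.2 hx
      have h3 := mr_mono ν h2
      linarith
  -- measure of Zinf
  have hZinflb : m - ε/2 ≤ (ν Zinf).toReal := by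
    have hcov : Y ⊆ Zinf ∪ Uinf := by
      intro x hx
      by_cases h : x ∈ Uinf
      · exact Or.inr h
      · exact Or.inl ⟨hx, h⟩
    have h2 := (mr_mono ν hcov).trans (mr_union_le ν _ _)
    rw [← hm] at h2
    linarith
  -- medium sets expand via lemma M
  have hmed : ∀ B, MeasurableSet B → B ⊆ Zinf → ε/2 ≤ (ν B).toReal →
      (ν B).toReal ≤ (ν Zinf).toReal/2 →
      (1 + 1/4) * (ν B).toReal < (ν (finSMul T B ∩ Zinf)).toReal := by
    intro B hB hBsub hBlb hBub
    have hBM := hTM B hB hBlb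
    have e1 : finSMul T B ⊆ (finSMul T B ∩ Zinf) ∪ Zinfᶜ := by
      intro x hx
      by_cases hxZ : x ∈ Zinf
      · exact Or.inl ⟨hx, hxZ⟩
      · exact Or.inr hxZ
    have e2 := (mr_mono ν e1).trans (mr_union_le ν _ _)
    rw [mr_compl ν hZinfmeas] at e2
    linarith
  -- conclusion
  refine ⟨Zinf, hZinfmeas, Set.diff_subset, ?_, ?_, ⟨1/4, by norm_num, T, hT, ?_⟩⟩
  · have hsub : Y \ Zinf ⊆ Uinf := by
      intro x hx
      by_contra h
      exact hx.2 ⟨hx.1, h⟩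
    have := mr_mono ν hsub
    linarith
  · exact (mr_pos_iff ν).mp (by linarith)
  · intro A hA hAsub hApos hAhalf
    have hApos' : 0 < (ν A).toReal := mr_pos ν hApos
    have hAhalf' : (ν A).toReal ≤ (ν Zinf).toReal / 2 := by
      have h2 := ENNReal.toReal_mono
        ((ENNReal.div_lt_top (measure_ne_top ν _) (by norm_num)).ne) hAhalf
      rwa [mr_half ν Zinf] at h2
    rw [expand_goal_iff ν (by norm_num : (0:ℝ) ≤ 1/4)]
    by_cases hcase : (ν A).toReal < ε/2
    · exact hsmall A hA hAsub hApos' hcase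
    · push_neg at hcase
      exact hmed A hA hAsub hcase hAhalf'
end KL2

section UC
variable {Γ X : Type*} [Group Γ] [MulAction Γ X] [MeasurableSpace X]
  (ν : Measure X) [IsProbabilityMeasure ν]

lemma le_half_iff {A Z : Set X} :
    ν A ≤ ν Z / 2 ↔ (ν A).toReal ≤ (ν Z).toReal / 2 := by
  rw [← ENNReal.toReal_le_toReal (measure_ne_top ν A)
    ((ENNReal.div_lt_top (measure_ne_top ν _) (by norm_num)).ne), mr_half]

lemma union_closure (hmeas : ∀ γ : Γ, Measurable fun x : X => γ • x) (hg : GlobExp Γ ν)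
    {Z₁ Z₂ : Set X} (h1m : MeasurableSet Z₁) (h2m : MeasurableSet Z₂)
    (h1p : 0 < ν Z₁) (h2p : 0 < ν Z₂)
    (h1 : ExpDomain Γ ν Z₁) (h2 : ExpDomain Γ ν Z₂) :
    ExpDomain Γ ν (Z₁ ∪ Z₂) := by
  classical
  obtain ⟨c₁, hc₁, S₁, hS₁, hE₁⟩ := h1
  obtain ⟨c₂, hc₂, S₂, hS₂, hE₂⟩ := h2
  set U := Z₁ ∪ Z₂ with hUdef
  have hUm : MeasurableSet U := h1m.union h2m
  have hUp : 0 < (ν U).toReal := by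
    have := mr_mono ν (Set.subset_union_left : Z₁ ⊆ U)
    have h0 := mr_pos ν h1p
    linarith
  set astar := min ((ν Z₁).toReal/2) ((ν Z₂).toReal/2) with hastar
  have hastarpos : 0 < astar :=
    lt_min (by linarith [mr_pos ν h1p]) (by linarith [mr_pos ν h2p])
  obtain ⟨T, hT, hTM⟩ := lemma_M ν hmeas hg astar ((ν U).toReal/8) hastarpos (by linarith)
  set c := min (min (c₁/2) (c₂/2)) (1/4) with hc
  have hcpos : 0 < c := lt_min (lt_min (by linarith) (by linarith)) (by norm_num)
  refine ⟨c, hcpos, (S₁ ∪ S₂) ∪ T, symmFin_union (symmFin_union hS₁ hS₂) hT, ?_⟩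
  set S := (S₁ ∪ S₂) ∪ T with hSdef
  have hSsymm : SymmFin S := symmFin_union (symmFin_union hS₁ hS₂) hT
  intro A hA hAsub hApos hAhalf
  have hApos' : 0 < (ν A).toReal := mr_pos ν hApos
  have hAhalf' : (ν A).toReal ≤ (ν U).toReal / 2 := (le_half_iff ν).mp hAhalf
  rw [expand_goal_iff ν hcpos.le]
  by_cases hcase : (ν A).toReal < astar
  · -- small case: expand inside whichever half carries at least half the mass
    have hcover : (ν A).toReal ≤ (ν (A ∩ Z₁)).toReal + (ν (A ∩ Z₂)).toReal := by
      have hsub : A ⊆ (A ∩ Z₁) ∪ (A ∩ Z₂) := by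
        intro x hx
        rcases hAsub hx with h | h
        · exact Or.inl ⟨hx, h⟩
        · exact Or.inr ⟨hx, h⟩
      exact (mr_mono ν hsub).trans (mr_union_le ν _ _)
    -- a helper applying to either side
    have main : ∀ (Zi : Set X) (ci : ℝ) (Si : Finset Γ), MeasurableSet Zi →
        ExpandsOn ν Zi ci Si → 0 < ci → SymmFin Si → Si ⊆ S → Zi ⊆ U →
        astar ≤ (ν Zi).toReal/2 →
        (ν A).toReal/2 ≤ (ν (A ∩ Zi)).toReal → ci/2 ≤ ci → c ≤ ci/2 →
        (1 + c) * (ν A).toReal < (ν (finSMul S A ∩ U)).toReal := by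
      intro Zi ci Si hZim hEi hcip hSi hSiS hZiU hasti hhalfmass _ hcci
      set B := A ∩ Zi with hB
      have hBm : MeasurableSet B := hA.inter hZim
      have hBsub : B ⊆ Zi := Set.inter_subset_right
      have hBpos : 0 < ν B := (mr_pos_iff ν).mp (by linarith)
      have hBhalf : ν B ≤ ν Zi / 2 := (le_half_iff ν).mpr (by
        have : (ν B).toReal ≤ (ν A).toReal := mr_mono ν Set.inter_subset_left
        linarith)
      have hexp := hEi B hBm hBsub hBpos hBhalf
      rw [expand_goal_iff ν hcip.le] at hexp
      set E := finSMul Si B ∩ Zi with hE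
      have hEm : MeasurableSet E := (finSMul_meas hmeas hBm Si).inter hZim
      -- E \ A has measure > ci * mr B  (since E ∩ A ⊆ B)
      have hEA : E ∩ A ⊆ B := fun x hx => ⟨hx.2, hx.1.2⟩
      have hEsplit : (ν E).toReal ≤ (ν (E \ A)).toReal + (ν B).toReal := by
        have hsub : E ⊆ (E \ A) ∪ B := by
          intro x hx
          by_cases hxA : x ∈ A
          · exact Or.inr (hEA ⟨hx, hxA⟩)
          · exact Or.inl ⟨hx, hxA⟩
        exact (mr_mono ν hsub).trans (mr_union_le ν _ _)
      -- A ∪ (E \ A) ⊆ finSMul S A ∩ U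
      have hbig : A ∪ (E \ A) ⊆ finSMul S A ∩ U := by
        intro x hx
        rcases hx with hx | hx
        · exact ⟨subset_finSMul hSsymm.1 A hx, hAsub hx⟩
        · refine ⟨?_, hZiU hx.1.2⟩
          have h1 : x ∈ finSMul Si B := hx.1.1
          have h2 : finSMul Si B ⊆ finSMul S A :=
            (finSMul_mono Set.inter_subset_left Si).trans (finSMul_mono_finset hSiS A)
          exact h2 h1
      have hdisj : Disjoint A (E \ A) := disjoint_sdiff_self_right
      have hEAm : MeasurableSet (E \ A) := hEm.diff hA
      have hun : (ν (A ∪ (E \ A))).toReal = (ν A).toReal + (ν (E \ A)).toReal :=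
        mr_union_disj ν hdisj hEAm
      have hfinal := mr_mono ν hbig
      rw [hun] at hfinal
      have hcB : c * (ν A).toReal ≤ ci * (ν B).toReal := by
        have e1 : c * (ν A).toReal ≤ (ci/2) * (ν A).toReal :=
          mul_le_mul_of_nonneg_right hcci (by linarith)
        have e2 : (ci/2) * (ν A).toReal ≤ ci * (ν B).toReal := by
          have := hhalfmass
          nlinarith
        linarith
      nlinarith
    by_cases hside : (ν A).toReal/2 ≤ (ν (A ∩ Z₁)).toReal
    · exact main Z₁ c₁ S₁ h1m hE₁ hc₁ hS₁
        ((Finset.subset_union_left).trans Finset.subset_union_left)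
        Set.subset_union_left (min_le_left _ _) hside (by linarith)
        ((min_le_left _ _).trans (min_le_left _ _))
    · push_neg at hside
      exact main Z₂ c₂ S₂ h2m hE₂ hc₂ hS₂
        ((Finset.subset_union_right).trans Finset.subset_union_left)
        Set.subset_union_right (min_le_right _ _) (by linarith) (by linarith)
        ((min_le_left _ _).trans (min_le_right _ _))
  · -- medium case: use lemma M
    push_neg at hcase
    have hAM := hTM A hA hcase
    have e1 : finSMul T A ⊆ (finSMul T A ∩ U) ∪ Uᶜ := by
      intro x hx
      by_cases hxU : x ∈ U
      · exact Or.inl ⟨hx, hxU⟩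
      · exact Or.inr hxU
    have e2 := (mr_mono ν e1).trans (mr_union_le ν _ _)
    rw [mr_compl ν hUm] at e2
    have e3 : (ν (finSMul T A ∩ U)).toReal ≤ (ν (finSMul S A ∩ U)).toReal :=
      mr_mono ν (Set.inter_subset_inter_left U (finSMul_mono_finset Finset.subset_union_right A))
    have hcc : c ≤ 1/4 := min_le_right _ _
    nlinarith
end UC

section Imps
variable {Γ X : Type*} [Group Γ] [MulAction Γ X] [MeasurableSpace X]
  (ν : Measure X) [IsProbabilityMeasure ν]

lemma expDomain_to_asym {Z : Set X} (hpos : 0 < ν Z) (h : ExpDomain Γ ν Z) :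
    AsymExpDomain Γ ν Z := by
  intro α hα hα2
  obtain ⟨c, hc, S, hS, hE⟩ := h
  refine ⟨c, hc, S, hS, fun A hA hsub hlb hub => hE A hA hsub ?_ hub⟩
  refine lt_of_lt_of_le ?_ hlb
  exact ENNReal.mul_pos (ENNReal.ofReal_pos.mpr hα).ne' hpos.ne'

lemma one_to_two (hmeas : ∀ γ : Γ, Measurable fun x : X => γ • x)
    (h : AsymExpDomain Γ ν Set.univ) :
    ∀ Y : Set X, MeasurableSet Y → 0 < ν Y →
      ExhaustionBy ν Y fun Z => 0 < ν Z ∧ ν Z < ⊤ ∧ ExpDomain Γ ν Z := by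
  intro Y hYm hYpos
  have hg : GlobExp Γ ν := globExp_of_one ν h
  have hmr : 0 < (ν Y).toReal := mr_pos ν hYpos
  set ε : ℕ → ℝ := fun n => min ((ν Y).toReal/4) ((1/2)^n) with hε
  have hεpos : ∀ n, 0 < ε n := fun n => lt_min (by linarith) (by positivity)
  have hεle : ∀ n, ε n ≤ (ν Y).toReal/4 := fun n => min_le_left _ _
  have hKL : ∀ n : ℕ, ∃ Z, MeasurableSet Z ∧ Z ⊆ Y ∧ (ν (Y \ Z)).toReal ≤ ε n ∧
      0 < ν Z ∧ ExpDomain Γ ν Z :=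
    fun n => key_lemma ν hmeas hg hYm hmr (hεpos n) (hεle n)
  choose Z hZm hZsub hZsm hZpos hZexp using hKL
  refine ⟨fun n => ⋃ j ∈ Finset.range (n+1), Z j, ?_, ?_, ?_, ?_, ?_⟩
  · intro a b hab
    exact Set.biUnion_subset_biUnion_left (Finset.range_subset_range.mpr (by omega))
  · exact fun n => Finset.measurableSet_biUnion _ (fun j _ => hZm j)
  · intro n
    exact Set.iUnion₂_subset (fun j _ => hZsub j)
  · intro n
    have hZ0sub : Z 0 ⊆ ⋃ j ∈ Finset.range (n+1), Z j :=
      Set.subset_biUnion_of_mem (Finset.mem_range.mpr (by omega))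
    refine ⟨lt_of_lt_of_le (hZpos 0) (measure_mono hZ0sub), measure_lt_top ν _, ?_⟩
    show ExpDomain Γ ν (⋃ j ∈ Finset.range (n+1), Z j)
    induction n with
    | zero =>
      have heq : ⋃ j ∈ Finset.range (0+1), Z j = Z 0 := by simp
      rw [heq]; exact hZexp 0
    | succ n ih =>
      have hsplit : ⋃ j ∈ Finset.range (n+2), Z j =
          (⋃ j ∈ Finset.range (n+1), Z j) ∪ Z (n+1) := by
        rw [Finset.range_add_one, Finset.set_biUnion_insert, Set.union_comm]
      rw [hsplit]
      have hWm : MeasurableSet (⋃ j ∈ Finset.range (n+1), Z j) :=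
        Finset.measurableSet_biUnion _ (fun j _ => hZm j)
      have hWpos : 0 < ν (⋃ j ∈ Finset.range (n+1), Z j) :=
        lt_of_lt_of_le (hZpos 0)
          (measure_mono (Set.subset_biUnion_of_mem (Finset.mem_range.mpr (by omega))))
      exact union_closure ν hmeas hg hWm (hZm (n+1)) hWpos (hZpos (n+1))
        (ih (Set.subset_biUnion_of_mem (Finset.mem_range.mpr (by omega)))) (hZexp (n+1))
  · -- null complement
    have hsub : ∀ n, Y \ (⋃ n, ⋃ j ∈ Finset.range (n+1), Z j) ⊆ Y \ Z n := by
      intro n x hx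
      refine ⟨hx.1, fun hxZ => hx.2 ?_⟩
      exact Set.mem_iUnion.mpr ⟨n, Set.subset_biUnion_of_mem
        (Finset.mem_range.mpr (by omega)) hxZ⟩
    have hle : ∀ n : ℕ, (ν (Y \ ⋃ n, ⋃ j ∈ Finset.range (n+1), Z j)).toReal ≤ (1/2)^n :=
      fun n => le_trans (le_trans (mr_mono ν (hsub n)) (hZsm n)) (min_le_right _ _)
    have htendpow : Tendsto (fun n : ℕ => ((1:ℝ)/2)^n) atTop (nhds 0) := by
      apply tendsto_pow_atTop_nhds_zero_of_lt_one <;> norm_num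
    have h0 : (ν (Y \ ⋃ n, ⋃ j ∈ Finset.range (n+1), Z j)).toReal ≤ 0 :=
      ge_of_tendsto' htendpow (fun n => hle n)
    have h0' : (ν (Y \ ⋃ n, ⋃ j ∈ Finset.range (n+1), Z j)).toReal = 0 :=
      le_antisymm h0 (mr_nonneg ν _)
    rcases (ENNReal.toReal_eq_zero_iff _).mp h0' with h | h
    · exact h
    · exact absurd h (measure_ne_top ν _)
end Imps

section FourOne
variable {Γ X : Type*} [Group Γ] [MulAction Γ X] [MeasurableSpace X]
  (ν : Measure X) [IsProbabilityMeasure ν]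

lemma four_to_one (hmeas : ∀ γ : Γ, Measurable fun x : X => γ • x)
    (h : ExhaustionBy ν Set.univ fun Z => 0 < ν Z ∧ ν Z < ⊤ ∧ AsymExpDomain Γ ν Z) :
    AsymExpDomain Γ ν Set.univ := by
  obtain ⟨W, hmono, hWm, hWsub, hWP, hWnull⟩ := h
  intro α hα hα2
  -- choose a deep member of the exhaustion
  have hinter : ⋂ n, (Set.univ \ W n) = Set.univ \ ⋃ n, W n := by
    ext x; simp
  have htend : Tendsto (fun n => ν (Set.univ \ W n)) atTop
      (nhds (ν (⋂ n, (Set.univ \ W n)))) := by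
    apply tendsto_measure_iInter_atTop (fun n => (MeasurableSet.univ.diff (hWm n)).nullMeasurableSet)
    · intro a b hab
      exact Set.diff_subset_diff_right (hmono hab)
    · exact ⟨0, measure_ne_top ν _⟩
  rw [hinter, hWnull] at htend
  have hev : ∀ᶠ n in atTop, ν (Set.univ \ W n) < ENNReal.ofReal (α/8) :=
    htend.eventually_lt_const (ENNReal.ofReal_pos.mpr (by linarith))
  obtain ⟨N, hN⟩ := hev.exists
  set Y := W N with hYdef
  have hYm : MeasurableSet Y := hWm N
  set m := (ν Y).toReal with hmdef
  have hcompl : (ν (Set.univ \ Y)).toReal < α/8 := ENNReal.toReal_lt_of_lt_ofReal hN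
  have hYc : (ν Yᶜ).toReal < α/8 := by
    rw [← Set.compl_eq_univ_diff] at hcompl; exact hcompl
  have hmlb : 1 - α/8 < m := by
    have := mr_compl ν hYm
    rw [this] at hYc
    linarith
  have hmub : m ≤ 1 := mr_le_one ν Y
  obtain ⟨hYpos, -, hYasym⟩ := hWP N
  obtain ⟨c₀, hc₀, S, hS, hE⟩ := hYasym (α/4) (by linarith) (by linarith)
  set c := min c₀ (1/2) with hcdef
  have hcpos : 0 < c := lt_min hc₀ (by norm_num)
  have hcle : c ≤ 1/2 := min_le_right _ _
  -- real form of the expansion estimate on Y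
  have hEreal : ∀ A : Set X, MeasurableSet A → A ⊆ Y → (α/4)*m ≤ (ν A).toReal →
      (ν A).toReal ≤ m/2 →
      (1+c) * (ν A).toReal < (ν (finSMul S A ∩ Y)).toReal := by
    intro A hA hsub hlb hub
    have hlb' : ENNReal.ofReal (α/4) * ν Y ≤ ν A := by
      rw [← ENNReal.ofReal_toReal (measure_ne_top ν Y), ← ENNReal.ofReal_mul (by linarith)]
      exact (ofReal_le_measure_iff ν).mpr hlb
    have hub' : ν A ≤ ν Y / 2 := (le_half_iff ν).mpr hub
    have h0 := hE A hA hsub hlb' hub'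
    rw [expand_goal_iff ν hc₀.le] at h0
    have : (1+c) * (ν A).toReal ≤ (1+c₀) * (ν A).toReal :=
      mul_le_mul_of_nonneg_right (add_le_add_right (min_le_left _ _) 1) (mr_nonneg ν A)
    linarith
  refine ⟨c*α/2, by positivity, S, hS, ?_⟩
  intro A hA _ hlb hub
  have hAlb : α ≤ (ν A).toReal := by
    rw [measure_univ, mul_one] at hlb
    exact (ofReal_le_measure_iff ν).mp hlb
  have hAub : (ν A).toReal ≤ 1/2 := by
    rw [measure_univ] at hub
    have h2 := ENNReal.toReal_mono (by simp) hub
    simpa using h2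
  rw [Set.inter_univ, expand_goal_iff ν (by positivity)]
  set a := (ν A).toReal with hadef
  set A' := A ∩ Y with hA'def
  have hA'm : MeasurableSet A' := hA.inter hYm
  have hA'sub : A' ⊆ Y := Set.inter_subset_right
  have hAYm : MeasurableSet (A \ Y) := hA.diff hYm
  have hasum : a = (ν (A \ Y)).toReal + (ν A').toReal := by
    have hAeq : (A \ Y) ∪ A' = A := by
      ext x; by_cases hxY : x ∈ Y <;> simp [hA'def, hxY]
    have hd : Disjoint (A \ Y) A' := by
      rw [Set.disjoint_iff]
      intro x hx
      exact hx.1.2 hx.2.2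
    rw [hadef]
    conv_lhs => rw [← hAeq]
    exact mr_union_disj ν hd hA'm
  have hAYsmall : (ν (A \ Y)).toReal ≤ α/8 := by
    have := mr_mono ν (show A \ Y ⊆ Yᶜ from fun x hx => hx.2)
    linarith
  have hA'lb : (7/8)*α ≤ (ν A').toReal := by linarith
  have hgain : ∀ G : Set X,
      (ν ((G ∩ Y) ∪ (A \ Y))).toReal = (ν (G ∩ Y)).toReal + (ν (A \ Y)).toReal := by
    intro G
    have hd : Disjoint (G ∩ Y) (A \ Y) := by
      rw [Set.disjoint_iff]
      intro x hx
      exact hx.2.2 hx.1.2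
    exact mr_union_disj ν hd hAYm
  have hbig : (finSMul S A' ∩ Y) ∪ (A \ Y) ⊆ finSMul S A := by
    intro x hx
    rcases hx with hx | hx
    · exact finSMul_mono Set.inter_subset_left S hx.1
    · exact subset_finSMul hS.1 A hx.1
  have hbig' := (hgain (finSMul S A')).symm.trans_le (mr_mono ν hbig)
  -- so  mr (S·A) ≥ mr (S·A' ∩ Y) + mr (A \ Y)
  have hca : 0 < c*α := mul_pos hcpos hα
  by_cases hA'half : (ν A').toReal ≤ m/2
  -- Case 1: A' is at most half of Y
  · have hexp := hEreal A' hA'm hA'sub (by nlinarith) hA'half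
    have hgoal : (1 + c*α/2) * a < (ν (finSMul S A)).toReal := by
      have e1 : (c*α/2) * a ≤ (c*α/2) * (1/2) :=
        mul_le_mul_of_nonneg_left hAub (by positivity)
      have e2 : c*((7/8)*α) ≤ c*(ν A').toReal :=
        mul_le_mul_of_nonneg_left hA'lb hcpos.le
      nlinarith
    exact hgoal
  -- Case 2: A' is more than half of Y
  · push_neg at hA'half
    set B := Y \ finSMul S A' with hBdef
    have hBm : MeasurableSet (B : Set X) := hYm.diff (finSMul_meas hmeas hA'm S)
    have hBY : B ⊆ Y := Set.diff_subset
    have hYB : Y ∩ finSMul S A' = Y \ B := by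
      rw [hBdef, Set.diff_diff_right_self]
    have hmYB : (ν (Y \ B)).toReal = m - (ν B).toReal := mr_diff ν hBY hBm
    have hSAY : (ν (finSMul S A' ∩ Y)).toReal = m - (ν B).toReal := by
      rw [Set.inter_comm, hYB, hmYB]
    by_cases hBsize : (ν B).toReal < (α/4)*m
    -- Case 2a: B is tiny, so S·A' covers almost all of Y
    · have hgoal : (1 + c*α/2) * a < (ν (finSMul S A)).toReal := by
      -- mr(S·A'∩Y) = m - mr B > m - (α/4)m ≥ 1 - α/8 - α/4
        have e0 : m - (α/4)*m ≤ (ν (finSMul S A' ∩ Y)).toReal := by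
          rw [hSAY]; linarith
        have e1 : m - (α/4)*m ≥ 1 - α/8 - α/4 := by nlinarith
        have e2 : (1 + c*α/2) * a ≤ (1 + c*α/2) * (1/2) :=
          mul_le_mul_of_nonneg_left hAub (by positivity)
        have e3 : c*α ≤ (1/2)*(1/2) := by
          have := mul_le_mul hcle hα2 hα.le (by norm_num : (0:ℝ) ≤ 1/2)
          linarith
        nlinarith [mr_nonneg ν (A \ Y)]
      exact hgoal
    -- Case 2b: B is sizeable, so B itself expands inside Y, away from A'
    · push_neg at hBsize
      have hBA' : Disjoint (finSMul S A') B := by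
        rw [Set.disjoint_iff]
        intro x hx
        exact hx.2.2 hx.1
      have hdisjswap : A' ∩ finSMul S B = ∅ := by
        apply disjoint_swap hS
        rw [Set.disjoint_iff] at hBA'
        exact Set.eq_empty_iff_forall_notMem.mpr (fun x hx => hBA' hx)
      have hBub : (ν B).toReal ≤ m/2 := by
        have hBsubYA : B ⊆ Y \ A' := by
          intro x hx
          exact ⟨hx.1, fun hxA => hx.2 (subset_finSMul hS.1 A' hxA)⟩
        have e1 := mr_mono ν hBsubYA
        rw [mr_diff ν hA'sub hA'm] at e1
        linarith
      have hexpB := hEreal B hBm hBY hBsize hBub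
      have hSBsub : finSMul S B ∩ Y ⊆ Y \ A' := by
        intro x hx
        refine ⟨hx.2, fun hxA => ?_⟩
        have : x ∈ A' ∩ finSMul S B := ⟨hxA, hx.1⟩
        rw [hdisjswap] at this
        exact this
      have e1 := (mr_mono ν hSBsub)
      rw [mr_diff ν hA'sub hA'm] at e1
      -- (1+c) mr B < m - mr A'
      have e2 : (1+c) * (ν B).toReal < m - (ν A').toReal := lt_of_lt_of_le hexpB e1
      -- d := m - mr A' ≥ 7/16
      have hd716 : 7/16 ≤ m - (ν A').toReal := by
        have : (ν A').toReal ≤ a := by linarith [mr_nonneg ν (A \ Y)]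
        linarith
      -- gain : m - mr B ≥ mr A' + (7/24) c
      have hgain2 : (ν A').toReal + (7/24)*c < m - (ν B).toReal := by
        set d := m - (ν A').toReal with hddef
        set bb := (ν B).toReal with hbbdef
        have hbb0 : 0 ≤ bb := mr_nonneg ν B
        have k1 : (d - bb) * (1 + c) > d * c := by nlinarith
        have k2 : 0 ≤ d - bb := by nlinarith
        have k3 : (d - bb) * (1 + c) ≤ (d - bb) * (3/2) :=
          mul_le_mul_of_nonneg_left (by linarith) k2
        have k4 : d * c ≥ (7/16) * c := mul_le_mul_of_nonneg_right hd716 hcpos.le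
        linarith
      have hgoal : (1 + c*α/2) * a < (ν (finSMul S A)).toReal := by
        have e3 : (c*α/2) * a ≤ (c*α/2) * (1/2) :=
          mul_le_mul_of_nonneg_left hAub (by positivity)
        have e4 : c*α/4 ≤ c/8 := by nlinarith
        nlinarith
      exact hgoal
end FourOne
/-- Theorem 4.6: structure theorem for asymptotically expanding
actions on probability spaces. -/
theorem structure_theorem_probability
    {Γ X : Type*} [Group Γ] [Countable Γ] [MulAction Γ X] [MeasurableSpace X]
    (ν : Measure X) [IsProbabilityMeasure ν]
    (hmeas : ∀ γ : Γ, Measurable fun x : X => γ • x) :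
    List.TFAE
      [ AsymExpDomain Γ ν Set.univ,
        ∀ Y : Set X, MeasurableSet Y → 0 < ν Y →
          ExhaustionBy ν Y fun Z => 0 < ν Z ∧ ν Z < ⊤ ∧ ExpDomain Γ ν Z,
        ExhaustionBy ν Set.univ fun Z => 0 < ν Z ∧ ν Z < ⊤ ∧ ExpDomain Γ ν Z,
        ExhaustionBy ν Set.univ fun Z => 0 < ν Z ∧ ν Z < ⊤ ∧ AsymExpDomain Γ ν Z ] := by
  tfae_have 1 → 2 := fun h => one_to_two ν hmeas h
  tfae_have 2 → 3 := fun h => h Set.univ MeasurableSet.univ (by simp)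
  tfae_have 3 → 4 := by
    rintro ⟨W, h1, h2, h3, h4, h5⟩
    exact ⟨W, h1, h2, h3, fun n => ⟨(h4 n).1, (h4 n).2.1,
      expDomain_to_asym ν (h4 n).1 (h4 n).2.2⟩, h5⟩
  tfae_have 4 → 1 := fun h => four_to_one ν hmeas h
  tfae_finish
end
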